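/- arXiv:1707.03252 — 10 statements merged into one kernel-verified Lean document; each statement's English description precedes it below -/
import Mathlib

section
/- If a K_{2,3}-free graph G has at least two anticomponents each containing at least two vertices, then the independence number of G is exactly 2. -/
open SimpleGraph Set

variable {V : Type*}

def IsStableSet (G : SimpleGraph V) (S : Set V) : Prop :=
  S.Pairwise fun a b => ¬ G.Adj a b

lemma adj_of_ne_comp {G : SimpleGraph V} {a b : V}
    (h : (Gᶜ).connectedComponentMk a ≠ (Gᶜ).connectedComponentMk b) : G.Adj a b := by
  by_contra hadj
  have hab : a ≠ b := by rintro rfl; exact h rfl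
  exact h (ConnectedComponent.sound ((G.compl_adj a b).2 ⟨hab, hadj⟩).reachable)

lemma exists_adj_of_reachable {G : SimpleGraph V} {w w' : V} (hne : w ≠ w')
    (h : G.Reachable w w') : ∃ y, G.Adj w y := by
  obtain ⟨p⟩ := h
  cases p with
  | nil => exact absurd rfl hne
  | cons h _ => exact ⟨_, h⟩

theorem stmt1 (G : SimpleGraph V)
    (hfree : IsEmpty (completeBipartiteGraph (Fin 2) (Fin 3) ↪g G))
    (u v : V) (huv : (Gᶜ).connectedComponentMk u ≠ (Gᶜ).connectedComponentMk v)
    (hu : ∃ u' ∈ ((Gᶜ).connectedComponentMk u).supp, u' ≠ u)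
    (hv : ∃ v' ∈ ((Gᶜ).connectedComponentMk v).supp, v' ≠ v) :
    (∃ S : Finset V, IsStableSet G ↑S ∧ S.card = 2) ∧
      ∀ S : Finset V, IsStableSet G ↑S → S.card ≤ 2 := by
  classical
  constructor
  · obtain ⟨u', hu'supp, hu'ne⟩ := hu
    rw [ConnectedComponent.mem_supp_iff, ConnectedComponent.eq] at hu'supp
    obtain ⟨y, hy⟩ := exists_adj_of_reachable hu'ne.symm hu'supp.symm
    obtain ⟨hne, hnadj⟩ := (G.compl_adj u y).1 hy
    refine ⟨{u, y}, ?_, ?_⟩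
    · intro a ha b hb hab
      simp only [Finset.coe_insert, Set.mem_insert_iff, Finset.coe_singleton,
        Set.mem_singleton_iff] at ha hb
      rcases ha with rfl | rfl <;> rcases hb with rfl | rfl <;>
        first
        | exact absurd rfl hab
        | exact hnadj
        | exact fun h => hnadj h.symm
    · exact Finset.card_pair hne
  · intro S hS
    by_contra hcard
    push_neg at hcard
    obtain ⟨T, hTS, hT3⟩ := Finset.exists_subset_card_eq hcard
    obtain ⟨a, b, c, hab, hac, hbc, hT⟩ := Finset.card_eq_three.1 hT3
    rw [hT] at hTS
    have hmem : ∀ x ∈ ({a, b, c} : Finset V), (x : V) ∈ (S : Set V) := fun x hx =>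
      hTS hx
    have hstab : ∀ x ∈ ({a, b, c} : Finset V), ∀ y ∈ ({a, b, c} : Finset V),
        x ≠ y → ¬ G.Adj x y := fun x hx y hy hxy =>
      hS (hmem x hx) (hmem y hy) hxy
    -- a, b, c are in the same anticomponent
    have hcompab : (Gᶜ).connectedComponentMk a = (Gᶜ).connectedComponentMk b := by
      by_contra h
      exact hstab a (by simp) b (by simp) hab (adj_of_ne_comp h)
    have hcompac : (Gᶜ).connectedComponentMk a = (Gᶜ).connectedComponentMk c := by
      by_contra h
      exact hstab a (by simp) c (by simp) hac (adj_of_ne_comp h)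
    -- pick w ∈ {u, v} whose component differs from that of a
    have hkey : ∃ w w' : V, w' ≠ w ∧
        (Gᶜ).connectedComponentMk w' = (Gᶜ).connectedComponentMk w ∧
        (Gᶜ).connectedComponentMk w ≠ (Gᶜ).connectedComponentMk a := by
      by_cases h : (Gᶜ).connectedComponentMk u = (Gᶜ).connectedComponentMk a
      · obtain ⟨v', hv'supp, hv'ne⟩ := hv
        rw [ConnectedComponent.mem_supp_iff] at hv'supp
        exact ⟨v, v', hv'ne, hv'supp, fun hh => huv (h ▸ hh ▸ rfl)⟩
      · obtain ⟨u', hu'supp, hu'ne⟩ := hu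
        rw [ConnectedComponent.mem_supp_iff] at hu'supp
        exact ⟨u, u', hu'ne, hu'supp, h⟩
    obtain ⟨w, w', hne, hcomp, hwa⟩ := hkey
    -- find a Gᶜ-edge in the component of w
    obtain ⟨y, hy⟩ := exists_adj_of_reachable (fun h => hne h.symm)
      ((ConnectedComponent.eq).1 hcomp.symm)
    have hwy : (Gᶜ).connectedComponentMk y = (Gᶜ).connectedComponentMk w :=
      ConnectedComponent.sound hy.reachable.symm
    obtain ⟨hwyne, hwynadj⟩ := (G.compl_adj w y).1 hy
    -- build the K_{2,3}
    have cross : ∀ x ∈ ({w, y} : Finset V), ∀ z ∈ ({a, b, c} : Finset V), G.Adj x z := by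
      intro x hx z hz
      apply adj_of_ne_comp
      have hxw : (Gᶜ).connectedComponentMk x = (Gᶜ).connectedComponentMk w := by
        rcases Finset.mem_insert.1 hx with rfl | hx
        · rfl
        · rw [Finset.mem_singleton.1 hx]; exact hwy
      have hza : (Gᶜ).connectedComponentMk z = (Gᶜ).connectedComponentMk a := by
        simp only [Finset.mem_insert, Finset.mem_singleton] at hz
        rcases hz with rfl | rfl | rfl
        · rfl
        · exact hcompab.symm
        · exact hcompac.symm
      rw [hxw, hza]; exact hwa
    let f : Fin 2 ⊕ Fin 3 → V := Sum.elim ![w, y] ![a, b, c]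
    have hdiff : ∀ x ∈ ({w, y} : Finset V), ∀ z ∈ ({a, b, c} : Finset V), x ≠ z :=
      fun x hx z hz => (cross x hx z hz).ne
    have hinj : Function.Injective f := by
      rintro (i | i) (j | j) hij
      · fin_cases i <;> fin_cases j <;>
          simp only [f, Sum.elim_inl, Matrix.cons_val_zero, Matrix.cons_val_one,
            Matrix.head_cons] at hij ⊢ <;>
          first
          | rfl
          | exact absurd hij hwyne
          | exact absurd hij.symm hwyne
      · exfalso
        fin_cases i <;> fin_cases j <;>
          simp only [f, Sum.elim_inl, Sum.elim_inr, Matrix.cons_val_zero, Matrix.cons_val_one,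
            Matrix.head_cons, Matrix.cons_val_two, Matrix.tail_cons] at hij <;>
          exact absurd hij (hdiff _ (by simp) _ (by simp))
      · exfalso
        fin_cases i <;> fin_cases j <;>
          simp only [f, Sum.elim_inl, Sum.elim_inr, Matrix.cons_val_zero, Matrix.cons_val_one,
            Matrix.head_cons, Matrix.cons_val_two, Matrix.tail_cons] at hij <;>
          exact absurd hij.symm (hdiff _ (by simp) _ (by simp))
      · fin_cases i <;> fin_cases j <;>
          simp only [f, Sum.elim_inr, Matrix.cons_val_zero, Matrix.cons_val_one,
            Matrix.head_cons, Matrix.cons_val_two, Matrix.tail_cons] at hij ⊢ <;>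
          first
          | rfl
          | exact absurd hij hab
          | exact absurd hij hac
          | exact absurd hij hbc
          | exact absurd hij.symm hab
          | exact absurd hij.symm hac
          | exact absurd hij.symm hbc
    have hadj : ∀ p q : Fin 2 ⊕ Fin 3,
        (completeBipartiteGraph (Fin 2) (Fin 3)).Adj p q ↔ G.Adj (f p) (f q) := by
      rintro (i | i) (j | j)
      · constructor
        · simp
        · intro h
          exfalso
          fin_cases i <;> fin_cases j <;>
            simp only [f, Sum.elim_inl, Matrix.cons_val_zero, Matrix.cons_val_one,
              Matrix.head_cons] at h
          · exact G.irrefl h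
          · exact hwynadj h
          · exact hwynadj h.symm
          · exact G.irrefl h
      · simp only [completeBipartiteGraph_adj, Sum.isLeft_inl, Sum.isRight_inr, true_and,
          Sum.isRight_inl, Sum.isLeft_inr, and_true, false_and, or_false, true_iff,
          and_false, true_or]
        exact cross _ (by fin_cases i <;> simp [f]) _ (by fin_cases j <;> simp [f])
      · simp only [completeBipartiteGraph_adj, Sum.isLeft_inr, Sum.isRight_inl, false_and,
          and_false, or_false, false_or, Sum.isRight_inr, Sum.isLeft_inl, true_and, and_true]
        refine ⟨fun _ => ?_, fun _ => Or.inr trivial⟩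
        exact (cross _ (by fin_cases j <;> simp [f]) _ (by fin_cases i <;> simp [f])).symm
      · constructor
        · simp
        · intro h
          exfalso
          fin_cases i <;> fin_cases j <;>
            simp only [f, Sum.elim_inr, Matrix.cons_val_zero, Matrix.cons_val_one,
              Matrix.head_cons, Matrix.cons_val_two, Matrix.tail_cons] at h
          · exact G.irrefl h
          · exact hstab a (by simp) b (by simp) hab h
          · exact hstab a (by simp) c (by simp) hac h
          · exact hstab b (by simp) a (by simp) hab.symm h
          · exact G.irrefl h
          · exact hstab b (by simp) c (by simp) hbc h
          · exact hstab c (by simp) a (by simp) hac.symm h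
          · exact hstab c (by simp) b (by simp) hbc.symm h
          · exact G.irrefl h
    exact hfree.false ⟨⟨f, hinj⟩, (hadj _ _).symm⟩
end

section
/- Let G be a house-free graph with independence number at most 2 that admits a clique-cutset. Then G is chordal. -/
open SimpleGraph Set

variable {V : Type*}

def CutPartition (G : SimpleGraph V) (A B C : Set V) : Prop :=
  A.Nonempty ∧ B.Nonempty ∧ Disjoint A B ∧ Disjoint A C ∧ Disjoint B C ∧
    A ∪ B ∪ C = Set.univ ∧ ∀ a ∈ A, ∀ b ∈ B, ¬ G.Adj a b

def CliqueCutPartition (G : SimpleGraph V) (A B C : Set V) : Prop :=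
  CutPartition G A B C ∧ G.IsClique C

def HasCliqueCutset (G : SimpleGraph V) : Prop := ∃ A B C, CliqueCutPartition G A B C

def IsChordal (G : SimpleGraph V) : Prop := ∀ n, 4 ≤ n → IsEmpty (cycleGraph n ↪g G)

/-- house lemma -/
lemma house_lemma {G : SimpleGraph V} (hfree : IsEmpty ((pathGraph 5)ᶜ ↪g G))
    {w x y z b : V}
    (hwy : w ≠ y) (hxz : x ≠ z) (hbw : b ≠ w) (hbx : b ≠ x)
    (awx : G.Adj w x) (axy : G.Adj x y) (ayz : G.Adj y z) (azw : G.Adj z w)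
    (aby : G.Adj b y) (abz : G.Adj b z)
    (nwy : ¬G.Adj w y) (nxz : ¬G.Adj x z) (nbw : ¬G.Adj b w) (nbx : ¬G.Adj b x) :
    False := by
  have hwx : w ≠ x := awx.ne
  have hxy : x ≠ y := axy.ne
  have hyz : y ≠ z := ayz.ne
  have hzw : z ≠ w := azw.ne
  have hby : b ≠ y := aby.ne
  have hbz : b ≠ z := abz.ne
  have nyw : ¬G.Adj y w := fun h => nwy h.symm
  have nzx : ¬G.Adj z x := fun h => nxz h.symm
  have nwb : ¬G.Adj w b := fun h => nbw h.symm
  have nxb : ¬G.Adj x b := fun h => nbx h.symm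
  have axw : G.Adj x w := awx.symm
  have ayx : G.Adj y x := axy.symm
  have azy : G.Adj z y := ayz.symm
  have awz : G.Adj w z := azw.symm
  have ayb : G.Adj y b := aby.symm
  have azb : G.Adj z b := abz.symm
  refine hfree.false ⟨⟨![z, x, b, w, y], ?_⟩, ?_⟩
  · intro i j hij
    fin_cases i <;> fin_cases j <;> simp_all
  · intro i j
    fin_cases i <;> fin_cases j <;>
      simp [compl_adj, pathGraph_adj, Fin.ext_iff] <;> tauto

lemma square_lemma {G : SimpleGraph V}
    (hfree : IsEmpty ((pathGraph 5)ᶜ ↪g G))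
    (stable3 : ∀ a b c : V, a ≠ b → a ≠ c → b ≠ c →
      ¬G.Adj a b → ¬G.Adj a c → ¬G.Adj b c → False)
    {A B : Set V} (hBne : B.Nonempty) (hABd : Disjoint A B)
    (hnoedge : ∀ a ∈ A, ∀ b ∈ B, ¬G.Adj a b)
    {w x y z : V} (hw : w ∈ A) (hx : x ∈ A) (hy : y ∉ B) (hz : z ∉ B)
    (hwy : w ≠ y) (hxz : x ≠ z)
    (awx : G.Adj w x) (axy : G.Adj x y) (ayz : G.Adj y z) (azw : G.Adj z w)
    (nwy : ¬G.Adj w y) (nxz : ¬G.Adj x z) : False := by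
  obtain ⟨v, hv⟩ := hBne
  have hvw : w ≠ v := hABd.ne_of_mem hw hv
  have hvx : x ≠ v := hABd.ne_of_mem hx hv
  have hyv : y ≠ v := fun h => hy (h ▸ hv)
  have hzv : z ≠ v := fun h => hz (h ▸ hv)
  have nwv : ¬G.Adj w v := hnoedge w hw v hv
  have nxv : ¬G.Adj x v := hnoedge x hx v hv
  have avy : G.Adj y v := by
    by_contra h
    exact stable3 w y v hwy hvw hyv nwy nwv h
  have avz : G.Adj z v := by
    by_contra h
    exact stable3 x z v hxz hvx hzv nxz nxv h
  exact house_lemma hfree hwy hxz hvw.symm hvx.symm awx axy ayz azw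
    avy.symm avz.symm nwy nxz (fun h => nwv h.symm) (fun h => nxv h.symm)

set_option maxRecDepth 20000 in
set_option maxHeartbeats 2000000 in
lemma d4 : ∀ c : Fin 4 → Fin 3,
    (∀ i j, (cycleGraph 4).Adj i j → ¬(c i = 0 ∧ c j = 1)) →
    (∀ i j, i ≠ j → ¬(cycleGraph 4).Adj i j → c i ≠ c j) →
    ((∀ i, c i ≠ 1) ∧ (c 0 = 0 ∨ c 2 = 0) ∧ (c 1 = 0 ∨ c 3 = 0)) ∨
    ((∀ i, c i ≠ 0) ∧ (c 0 = 1 ∨ c 2 = 1) ∧ (c 1 = 1 ∨ c 3 = 1)) := by decide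

set_option maxRecDepth 20000 in
set_option maxHeartbeats 2000000 in
lemma d5 : ∀ c : Fin 5 → Fin 3,
    (∀ i j, (cycleGraph 5).Adj i j → ¬(c i = 0 ∧ c j = 1)) →
    (∀ i j, i ≠ j → ¬(cycleGraph 5).Adj i j → c i ≠ c j) → False := by decide

lemma cycle_nonadj {m : ℕ} {a b : ℕ} (h1 : a + 2 ≤ b) (h2 : b + 2 ≤ m + 6) :
    ¬ (cycleGraph (m + 6)).Adj ⟨a, by omega⟩ ⟨b, by omega⟩ := by
  rw [cycleGraph_adj']
  push_neg
  constructor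
  · rw [Fin.sub_def]
    simp only
    have e : (m + 6 - b + a) % (m + 6) = m + 6 - b + a := Nat.mod_eq_of_lt (by omega)
    omega
  · rw [Fin.sub_def]
    simp only
    have e : m + 6 - a + b = (m + 6) + (b - a) := by omega
    rw [e, Nat.add_mod_left, Nat.mod_eq_of_lt (by omega)]
    omega

theorem stmt3 (G : SimpleGraph V)
    (hfree : IsEmpty ((pathGraph 5)ᶜ ↪g G))
    (halpha : ∀ S : Finset V, IsStableSet G ↑S → S.card ≤ 2)
    (hcut : HasCliqueCutset G) :
    IsChordal G := by
  classical
  obtain ⟨A, B, C, ⟨⟨hAne, hBne, hAB, hAC, hBC, hcover, hnoedge⟩, hCclq⟩⟩ := hcut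
  have stable3 : ∀ a b c : V, a ≠ b → a ≠ c → b ≠ c →
      ¬G.Adj a b → ¬G.Adj a c → ¬G.Adj b c → False := by
    intro a b c hab hac hbc nab nac nbc
    have hS : IsStableSet G ↑({a, b, c} : Finset V) := by
      intro u hu v hv huv
      simp only [Finset.coe_insert, Finset.coe_singleton, Set.mem_insert_iff,
        Set.mem_singleton_iff] at hu hv
      rcases hu with rfl | rfl | rfl <;> rcases hv with rfl | rfl | rfl <;>
        first
        | exact absurd rfl huv
        | assumption
        | exact fun h => nab h.symm
        | exact fun h => nac h.symm
        | exact fun h => nbc h.symm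
    have := halpha {a, b, c} hS
    rw [Finset.card_insert_of_notMem (by simp [hab, hac]),
      Finset.card_insert_of_notMem (by simp [hbc]), Finset.card_singleton] at this
    omega
  have hAclq : G.IsClique A := by
    intro a1 ha1 a2 ha2 hne
    obtain ⟨b, hb⟩ := hBne
    by_contra hadj
    exact stable3 a1 a2 b hne (hAB.ne_of_mem ha1 hb) (hAB.ne_of_mem ha2 hb)
      hadj (hnoedge a1 ha1 b hb) (hnoedge a2 ha2 b hb)
  have hBclq : G.IsClique B := by
    intro b1 hb1 b2 hb2 hne
    obtain ⟨a, ha⟩ := hAne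
    by_contra hadj
    exact stable3 b1 b2 a hne (hAB.symm.ne_of_mem hb1 ha) (hAB.symm.ne_of_mem hb2 ha)
      hadj (fun h => hnoedge a ha b1 hb1 h.symm) (fun h => hnoedge a ha b2 hb2 h.symm)
  have hnoedge' : ∀ b ∈ B, ∀ a ∈ A, ¬G.Adj b a := fun b hb a ha h => hnoedge a ha b hb h.symm
  intro n hn
  constructor
  intro f
  -- the coloring machinery, generic in n
  have mkcol : ∀ (k : ℕ) (g : cycleGraph k ↪g G),
      ∃ c : Fin k → Fin 3,
        (∀ i, (c i = 0 ∧ g i ∈ A) ∨ (c i = 1 ∧ g i ∈ B) ∨ (c i = 2 ∧ g i ∈ C)) := by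
    intro k g
    refine ⟨fun i => if g i ∈ A then 0 else if g i ∈ B then 1 else 2, fun i => ?_⟩
    by_cases h1 : g i ∈ A
    · left; simp [h1]
    by_cases h2 : g i ∈ B
    · right; left; simp [h1, h2]
    · right; right
      refine ⟨by simp [h1, h2], ?_⟩
      have : g i ∈ A ∪ B ∪ C := hcover ▸ Set.mem_univ _
      simp only [Set.mem_union] at this
      tauto
  have hEcon : ∀ (k : ℕ) (g : cycleGraph k ↪g G) (c : Fin k → Fin 3),
      (∀ i, (c i = 0 ∧ g i ∈ A) ∨ (c i = 1 ∧ g i ∈ B) ∨ (c i = 2 ∧ g i ∈ C)) →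
      (∀ i j, (cycleGraph k).Adj i j → ¬(c i = 0 ∧ c j = 1)) := by
    intro k g c key i j hadj ⟨hi, hj⟩
    have hgA : g i ∈ A := by
      rcases key i with ⟨_, h⟩ | ⟨h, _⟩ | ⟨h, _⟩
      · exact h
      · exact absurd (hi.symm.trans h) (by decide)
      · exact absurd (hi.symm.trans h) (by decide)
    have hgB : g j ∈ B := by
      rcases key j with ⟨h, _⟩ | ⟨_, h⟩ | ⟨h, _⟩
      · exact absurd (hj.symm.trans h) (by decide)
      · exact h
      · exact absurd (hj.symm.trans h) (by decide)
    exact hnoedge _ hgA _ hgB (g.map_adj_iff.mpr hadj)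
  have hNcon : ∀ (k : ℕ) (g : cycleGraph k ↪g G) (c : Fin k → Fin 3),
      (∀ i, (c i = 0 ∧ g i ∈ A) ∨ (c i = 1 ∧ g i ∈ B) ∨ (c i = 2 ∧ g i ∈ C)) →
      (∀ i j, i ≠ j → ¬(cycleGraph k).Adj i j → c i ≠ c j) := by
    intro k g c key i j hij hnadj hc
    have hgne : g i ≠ g j := fun h => hij (g.injective h)
    have hgnadj : ¬G.Adj (g i) (g j) := fun h => hnadj (g.map_adj_iff.mp h)
    rcases key i with ⟨hci, hi⟩ | ⟨hci, hi⟩ | ⟨hci, hi⟩ <;>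
      rcases key j with ⟨hcj, hj⟩ | ⟨hcj, hj⟩ | ⟨hcj, hj⟩ <;>
      rw [hci, hcj] at hc <;>
      first
      | exact absurd hc (by decide)
      | exact hgnadj (hAclq hi hj hgne)
      | exact hgnadj (hBclq hi hj hgne)
      | exact hgnadj (hCclq hi hj hgne)
  obtain h4 | h5 | ⟨m, rfl⟩ : n = 4 ∨ n = 5 ∨ ∃ m, n = m + 6 := by
    rcases Nat.lt_or_ge n 6 with h | h
    · interval_cases n <;> simp
    · exact Or.inr (Or.inr ⟨n - 6, by omega⟩)
  · subst h4
    obtain ⟨c, key⟩ := mkcol 4 f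
    have econ := hEcon 4 f c key
    have ncon := hNcon 4 f c key
    have adjmap : ∀ i j : Fin 4, (cycleGraph 4).Adj i j → G.Adj (f i) (f j) :=
      fun i j h => f.map_adj_iff.mpr h
    have nadjmap : ∀ i j : Fin 4, ¬(cycleGraph 4).Adj i j → ¬G.Adj (f i) (f j) :=
      fun i j h hh => h (f.map_adj_iff.mp hh)
    have inj : ∀ i j : Fin 4, i ≠ j → f i ≠ f j := fun i j h hh => h (f.injective hh)
    have memA : ∀ i, c i = 0 → f i ∈ A := by
      intro i h
      rcases key i with ⟨_, hh⟩ | ⟨hc, _⟩ | ⟨hc, _⟩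
      · exact hh
      · exact absurd (h.symm.trans hc) (by decide)
      · exact absurd (h.symm.trans hc) (by decide)
    have memB : ∀ i, c i = 1 → f i ∈ B := by
      intro i h
      rcases key i with ⟨hc, _⟩ | ⟨_, hh⟩ | ⟨hc, _⟩
      · exact absurd (h.symm.trans hc) (by decide)
      · exact hh
      · exact absurd (h.symm.trans hc) (by decide)
    have nmemB : ∀ i, c i ≠ 1 → f i ∉ B := by
      intro i h hh
      rcases key i with ⟨_, hA⟩ | ⟨hc, _⟩ | ⟨_, hC⟩
      · exact hAB.ne_of_mem hA hh rfl
      · exact h hc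
      · exact hBC.ne_of_mem hh hC rfl
    have nmemA : ∀ i, c i ≠ 0 → f i ∉ A := by
      intro i h hh
      rcases key i with ⟨hc, _⟩ | ⟨_, hB⟩ | ⟨_, hC⟩
      · exact h hc
      · exact hAB.ne_of_mem hh hB rfl
      · exact hAC.ne_of_mem hh hC rfl
    rcases d4 c econ ncon with ⟨hno1, h02, h13⟩ | ⟨hno0, h02, h13⟩
    · -- cycle avoids B; use A-side square lemma
      have hy2 : ∀ i : Fin 4, f i ∉ B := fun i => nmemB i (hno1 i)
      rcases h02 with h0 | h0 <;> rcases h13 with h1 | h1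
      · exact square_lemma hfree stable3 hBne hAB hnoedge (memA 0 h0) (memA 1 h1)
          (hy2 2) (hy2 3) (inj 0 2 (by decide)) (inj 1 3 (by decide))
          (adjmap 0 1 (by decide)) (adjmap 1 2 (by decide)) (adjmap 2 3 (by decide))
          (adjmap 3 0 (by decide)) (nadjmap 0 2 (by decide)) (nadjmap 1 3 (by decide))
      · exact square_lemma hfree stable3 hBne hAB hnoedge (memA 3 h1) (memA 0 h0)
          (hy2 1) (hy2 2) (inj 3 1 (by decide)) (inj 0 2 (by decide))
          (adjmap 3 0 (by decide)) (adjmap 0 1 (by decide)) (adjmap 1 2 (by decide))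
          (adjmap 2 3 (by decide)) (nadjmap 3 1 (by decide)) (nadjmap 0 2 (by decide))
      · exact square_lemma hfree stable3 hBne hAB hnoedge (memA 1 h1) (memA 2 h0)
          (hy2 3) (hy2 0) (inj 1 3 (by decide)) (inj 2 0 (by decide))
          (adjmap 1 2 (by decide)) (adjmap 2 3 (by decide)) (adjmap 3 0 (by decide))
          (adjmap 0 1 (by decide)) (nadjmap 1 3 (by decide)) (nadjmap 2 0 (by decide))
      · exact square_lemma hfree stable3 hBne hAB hnoedge (memA 2 h0) (memA 3 h1)
          (hy2 0) (hy2 1) (inj 2 0 (by decide)) (inj 3 1 (by decide))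
          (adjmap 2 3 (by decide)) (adjmap 3 0 (by decide)) (adjmap 0 1 (by decide))
          (adjmap 1 2 (by decide)) (nadjmap 2 0 (by decide)) (nadjmap 3 1 (by decide))
    · -- cycle avoids A; use B-side square lemma
      have hy2 : ∀ i : Fin 4, f i ∉ A := fun i => nmemA i (hno0 i)
      rcases h02 with h0 | h0 <;> rcases h13 with h1 | h1
      · exact square_lemma hfree stable3 hAne hAB.symm hnoedge' (memB 0 h0) (memB 1 h1)
          (hy2 2) (hy2 3) (inj 0 2 (by decide)) (inj 1 3 (by decide))
          (adjmap 0 1 (by decide)) (adjmap 1 2 (by decide)) (adjmap 2 3 (by decide))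
          (adjmap 3 0 (by decide)) (nadjmap 0 2 (by decide)) (nadjmap 1 3 (by decide))
      · exact square_lemma hfree stable3 hAne hAB.symm hnoedge' (memB 3 h1) (memB 0 h0)
          (hy2 1) (hy2 2) (inj 3 1 (by decide)) (inj 0 2 (by decide))
          (adjmap 3 0 (by decide)) (adjmap 0 1 (by decide)) (adjmap 1 2 (by decide))
          (adjmap 2 3 (by decide)) (nadjmap 3 1 (by decide)) (nadjmap 0 2 (by decide))
      · exact square_lemma hfree stable3 hAne hAB.symm hnoedge' (memB 1 h1) (memB 2 h0)
          (hy2 3) (hy2 0) (inj 1 3 (by decide)) (inj 2 0 (by decide))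
          (adjmap 1 2 (by decide)) (adjmap 2 3 (by decide)) (adjmap 3 0 (by decide))
          (adjmap 0 1 (by decide)) (nadjmap 1 3 (by decide)) (nadjmap 2 0 (by decide))
      · exact square_lemma hfree stable3 hAne hAB.symm hnoedge' (memB 2 h0) (memB 3 h1)
          (hy2 0) (hy2 1) (inj 2 0 (by decide)) (inj 3 1 (by decide))
          (adjmap 2 3 (by decide)) (adjmap 3 0 (by decide)) (adjmap 0 1 (by decide))
          (adjmap 1 2 (by decide)) (nadjmap 2 0 (by decide)) (nadjmap 3 1 (by decide))
  · subst h5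
    obtain ⟨c, key⟩ := mkcol 5 f
    exact d5 c (hEcon 5 f c key) (hNcon 5 f c key)
  · -- n ≥ 6 : stable triple
    have n02 : ¬ (cycleGraph (m + 6)).Adj ⟨0, by omega⟩ ⟨2, by omega⟩ :=
      cycle_nonadj (by omega) (by omega)
    have n04 : ¬ (cycleGraph (m + 6)).Adj ⟨0, by omega⟩ ⟨4, by omega⟩ :=
      cycle_nonadj (by omega) (by omega)
    have n24 : ¬ (cycleGraph (m + 6)).Adj ⟨2, by omega⟩ ⟨4, by omega⟩ :=
      cycle_nonadj (by omega) (by omega)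
    refine stable3 (f ⟨0, by omega⟩) (f ⟨2, by omega⟩) (f ⟨4, by omega⟩)
      (fun h => ?_) (fun h => ?_) (fun h => ?_)
      (fun h => n02 (f.map_adj_iff.mp h)) (fun h => n04 (f.map_adj_iff.mp h))
      (fun h => n24 (f.map_adj_iff.mp h))
    · exact absurd (f.injective h) (by simp [Fin.ext_iff])
    · exact absurd (f.injective h) (by simp [Fin.ext_iff])
    · exact absurd (f.injective h) (by simp [Fin.ext_iff])
end

section
/- Let R be a k-ring with good partition (X_1,…,X_k). Then every hole (induced cycle of length at least 4) in R intersects each of X_1,…,X_k in exactly one vertex; consequently every hole in R has length exactly k. -/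
open SimpleGraph Set

variable {V : Type*}

/-- closed neighborhood -/
def closedNbhd (G : SimpleGraph V) (v : V) : Set V := insert v (G.neighborSet v)

def IsRingPartition (G : SimpleGraph V) (k : ℕ) (X : ZMod k → Set V) : Prop :=
  4 ≤ k ∧ (∀ i, (X i).Nonempty) ∧ (Pairwise fun i j => Disjoint (X i) (X j)) ∧
    (⋃ i, X i) = Set.univ ∧
    ∀ i : ZMod k, ∃ (n : ℕ) (u : Fin (n + 1) → V),
      Function.Injective u ∧ Set.range u = X i ∧
      (∀ a b : Fin (n + 1), a ≤ b → closedNbhd G (u b) ⊆ closedNbhd G (u a)) ∧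
      X i ⊆ closedNbhd G (u (Fin.last n)) ∧
      closedNbhd G (u 0) = X (i - 1) ∪ X i ∪ X (i + 1)

lemma mem_closedNbhd {G : SimpleGraph V} {x y : V} :
    y ∈ closedNbhd G x ↔ y = x ∨ G.Adj x y := by
  simp [closedNbhd, mem_insert_iff, mem_neighborSet]

section Helpers

variable {G : SimpleGraph V} {k : ℕ} {X : ZMod k → Set V}

lemma part_clique (h : IsRingPartition G k X) (i : ZMod k) {x y : V}
    (hx : x ∈ X i) (hy : y ∈ X i) (hxy : x ≠ y) : G.Adj x y := by
  obtain ⟨-, -, -, -, hchain⟩ := h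
  obtain ⟨m, u, huinj, hurange, hmono, hXsub, h0⟩ := hchain i
  rw [← hurange] at hx
  obtain ⟨a, rfl⟩ := hx
  have : y ∈ closedNbhd G (u a) :=
    hmono a (Fin.last m) (Fin.le_last a) (hXsub hy)
  rcases mem_closedNbhd.mp this with h1 | h1
  · exact absurd h1.symm hxy
  · exact h1

lemma part_dom (h : IsRingPartition G k X) (i : ZMod k) {x y : V}
    (hx : x ∈ X i) (hy : y ∈ X i) :
    closedNbhd G x ⊆ closedNbhd G y ∨ closedNbhd G y ⊆ closedNbhd G x := by
  obtain ⟨-, -, -, -, hchain⟩ := h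
  obtain ⟨m, u, huinj, hurange, hmono, hXsub, h0⟩ := hchain i
  rw [← hurange] at hx hy
  obtain ⟨a, rfl⟩ := hx
  obtain ⟨b, rfl⟩ := hy
  rcases le_total a b with hab | hab
  · exact Or.inr (hmono a b hab)
  · exact Or.inl (hmono b a hab)

lemma part_nbhd (h : IsRingPartition G k X) (i : ZMod k) {x y : V}
    (hx : x ∈ X i) (hxy : G.Adj x y) :
    y ∈ X (i - 1) ∪ X i ∪ X (i + 1) := by
  obtain ⟨-, -, -, -, hchain⟩ := h
  obtain ⟨m, u, huinj, hurange, hmono, hXsub, h0⟩ := hchain i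
  rw [← hurange] at hx
  obtain ⟨a, rfl⟩ := hx
  rw [← h0]
  exact hmono 0 a (Fin.zero_le a) (mem_closedNbhd.mpr (Or.inr hxy))

end Helpers

open Fin.NatCast Fin.CommRing

lemma fin_cast_ne {N a b : ℕ} [NeZero N] (hab : a < b) (hN : b - a < N) :
    (a : Fin N) ≠ (b : Fin N) := by
  intro hEq
  have h0 : ((b - a : ℕ) : Fin N) = 0 := by
    rw [Nat.cast_sub hab.le, ← hEq, sub_self]
  have := Fin.natCast_eq_zero.mp h0
  have := Nat.le_of_dvd (by omega) this
  omega

theorem stmt5 (G : SimpleGraph V) (k : ℕ) (X : ZMod k → Set V)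
    (h : IsRingPartition G k X) :
    ∀ (n : ℕ), 4 ≤ n → ∀ _f : cycleGraph n ↪g G,
      (∀ i : ZMod k, ∃! x, x ∈ Set.range ⇑_f ∩ X i) ∧ n = k := by
  intro n hn f
  obtain ⟨m, rfl⟩ : ∃ m, n = m + 2 := ⟨n - 2, by omega⟩
  have hm : 2 ≤ m := by omega
  haveI : NeZero (m + 2) := ⟨by omega⟩
  obtain ⟨hk4, hne, hdisj, hcover, hchain⟩ := id h
  haveI : NeZero k := ⟨by omega⟩
  have exists_idx : ∀ v : V, ∃ i, v ∈ X i := by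
    intro v
    have : v ∈ ⋃ i, X i := hcover ▸ mem_univ v
    simpa using this
  choose idx hidx using exists_idx
  have idx_eq : ∀ v i, v ∈ X i → idx v = i := by
    intro v i hv
    by_contra hne'
    exact Set.disjoint_left.mp (hdisj hne') (hidx v) hv
  -- small Fin facts
  have fne : ∀ a b : ℕ, a < b → b - a < m + 2 → (a : Fin (m + 2)) ≠ (b : Fin (m + 2)) :=
    fun a b h1 h2 => fin_cast_ne h1 h2
  -- no edge of the hole inside one part
  have edge_false : ∀ (i : ZMod k) (a : Fin (m + 2)),
      f a ∈ X i → f (a + 1) ∈ X i → False := by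
    intro i a ha ha1
    have two_ne : (2 : Fin (m + 2)) ≠ 0 := by
      intro h2
      exact fne 0 2 (by omega) (by omega)
        (by exact_mod_cast h2.symm)
    have two_ne_one : (2 : Fin (m + 2)) ≠ 1 := by
      intro h2
      exact fne 1 2 (by omega) (by omega) (by exact_mod_cast h2.symm)
    have three_ne : (3 : Fin (m + 2)) ≠ 0 := by
      intro h2
      exact fne 0 3 (by omega) (by omega) (by exact_mod_cast h2.symm)
    rcases part_dom h i ha ha1 with hsub | hsub
    · -- N[f a] ⊆ N[f (a+1)]; other neighbor of a is a - 1
      have hrp : a - 1 ≠ a + 1 := by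
        intro hEq
        exact two_ne (by linear_combination -hEq)
      have hadjqr : (cycleGraph (m + 2)).Adj a (a - 1) := by
        rw [cycleGraph_adj]; left; ring
      have hfr : f (a - 1) ∈ closedNbhd G (f (a + 1)) :=
        hsub (mem_closedNbhd.mpr (Or.inr (f.map_adj_iff.mpr hadjqr)))
      rcases mem_closedNbhd.mp hfr with h1' | h1'
      · exact hrp (f.injective h1')
      · have : (cycleGraph (m + 2)).Adj (a + 1) (a - 1) := f.map_adj_iff.mp h1'
        rw [cycleGraph_adj] at this
        rcases this with h2 | h2
        · exact two_ne_one (by linear_combination h2)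
        · exact three_ne (by linear_combination -h2)
    · -- N[f (a+1)] ⊆ N[f a]; other neighbor of a+1 is a + 2
      have hrp : a + 1 + 1 ≠ a := by
        intro hEq
        exact two_ne (by linear_combination hEq)
      have hadjqr : (cycleGraph (m + 2)).Adj (a + 1) (a + 1 + 1) := by
        rw [cycleGraph_adj]; right; ring
      have hfr : f (a + 1 + 1) ∈ closedNbhd G (f a) :=
        hsub (mem_closedNbhd.mpr (Or.inr (f.map_adj_iff.mpr hadjqr)))
      rcases mem_closedNbhd.mp hfr with h1' | h1'
      · exact hrp (f.injective h1')
      · have : (cycleGraph (m + 2)).Adj a (a + 1 + 1) := f.map_adj_iff.mp h1'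
        rw [cycleGraph_adj] at this
        rcases this with h2 | h2
        · exact three_ne (by linear_combination -h2)
        · exact two_ne_one (by linear_combination h2)
  -- at most one hole vertex per part
  have uniq : ∀ (i : ZMod k) (p q : Fin (m + 2)), f p ∈ X i → f q ∈ X i → p = q := by
    intro i p q hp hq
    by_contra hpq
    have hfpq : f p ≠ f q := fun hEq => hpq (f.injective hEq)
    have hadjC : (cycleGraph (m + 2)).Adj p q := f.map_adj_iff.mp (part_clique h i hp hq hfpq)
    rw [cycleGraph_adj] at hadjC
    rcases hadjC with h1 | h1
    · have hpq1 : p = q + 1 := by linear_combination h1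
      rw [hpq1] at hp
      exact edge_false i q hq hp
    · have hqp1 : q = p + 1 := by linear_combination h1
      rw [hqp1] at hq
      exact edge_false i p hp hq
  -- the index sequence along the hole
  set c : ℕ → ZMod k := fun t => idx (f (t : Fin (m + 2))) with hc
  have step : ∀ t : ℕ, c (t + 1) = c t + 1 ∨ c (t + 1) = c t - 1 := by
    intro t
    have hadj : (cycleGraph (m + 2)).Adj (t : Fin (m + 2)) ((t + 1 : ℕ) : Fin (m + 2)) := by
      rw [cycleGraph_adj]
      right
      push_cast
      ring
    have hmem := part_nbhd h (c t) (hidx (f (t : Fin (m + 2)))) (f.map_adj_iff.mpr hadj)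
    rcases hmem with (h1 | h1) | h1
    · right; exact idx_eq _ _ h1
    · -- same part: contradiction
      exfalso
      have := uniq (c t) (t : Fin (m + 2)) ((t + 1 : ℕ) : Fin (m + 2))
        (hidx _) h1
      exact fne t (t + 1) (by omega) (by omega) this
    · left; exact idx_eq _ _ h1
  -- constant direction
  have main : ∀ d : ZMod k, (d = 1 ∨ d = -1) → c 1 = c 0 + d →
      ∀ t : ℕ, c (t + 1) = c t + d := by
    intro d hd1 hbase t
    induction t with
    | zero => exact hbase
    | succ t ih =>
      have hne2 : ((t : ℕ) : Fin (m + 2)) ≠ (((t + 2 : ℕ)) : Fin (m + 2)) :=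
        fne t (t + 2) (by omega) (by omega)
      have hmem2 : f ((t : ℕ) : Fin (m + 2)) ∈ X (c t) := hidx _
      rcases hd1 with rfl | rfl
      · rcases step (t + 1) with h1 | h1
        · exact h1
        · exfalso
          have hct : c (t + 2) = c t := by rw [h1, ih]; ring
          have hmem3 : f (((t + 2 : ℕ)) : Fin (m + 2)) ∈ X (c t) := by
            rw [← hct]; exact hidx _
          exact hne2 (uniq (c t) _ _ hmem2 hmem3)
      · rcases step (t + 1) with h1 | h1
        · exfalso
          have hct : c (t + 2) = c t := by rw [h1, ih]; ring
          have hmem3 : f (((t + 2 : ℕ)) : Fin (m + 2)) ∈ X (c t) := by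
            rw [← hct]; exact hidx _
          exact hne2 (uniq (c t) _ _ hmem2 hmem3)
        · rw [h1]; ring
  obtain ⟨d, hd1, hdir⟩ : ∃ d : ZMod k, (d = 1 ∨ d = -1) ∧ ∀ t : ℕ, c (t + 1) = c t + d := by
    rcases step 0 with h1 | h1
    · exact ⟨1, Or.inl rfl, main 1 (Or.inl rfl) h1⟩
    · exact ⟨-1, Or.inr rfl, main (-1) (Or.inr rfl) (by rw [h1]; ring)⟩
  have hdd : d * d = 1 := by rcases hd1 with rfl | rfl <;> ring
  have lin : ∀ t : ℕ, c t = c 0 + (t : ZMod k) * d := by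
    intro t
    induction t with
    | zero => simp
    | succ t ih =>
      rw [hdir t, ih]
      push_cast
      ring
  -- k divides m + 2
  have hwrap : c (m + 2) = c 0 := by
    show idx (f (((m + 2 : ℕ)) : Fin (m + 2))) = idx (f ((0 : ℕ) : Fin (m + 2)))
    rw [Fin.natCast_self]
    norm_num
  have hcast0 : ((m + 2 : ℕ) : ZMod k) = 0 := by
    have h1 := lin (m + 2)
    rw [hwrap] at h1
    have h2 : ((m + 2 : ℕ) : ZMod k) * d = 0 := by linear_combination -h1
    rcases hd1 with rfl | rfl
    · linear_combination h2
    · linear_combination -h2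
  have hdvd : k ∣ m + 2 := (ZMod.natCast_eq_zero_iff _ _).mp hcast0
  -- m + 2 ≤ k
  have hle : m + 2 ≤ k := by
    by_contra hlt
    push_neg at hlt
    have hck : c k = c 0 := by
      rw [lin k, ZMod.natCast_self]
      ring
    have h0 : f ((0 : ℕ) : Fin (m + 2)) ∈ X (c 0) := hidx _
    have h1 : f ((k : ℕ) : Fin (m + 2)) ∈ X (c 0) := by rw [← hck]; exact hidx _
    exact fne 0 k (by omega) (by omega) (uniq (c 0) _ _ h0 h1)
  have hnk : m + 2 = k := by
    have := Nat.le_of_dvd (by omega) hdvd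
    omega
  refine ⟨?_, hnk⟩
  intro i
  -- existence and uniqueness of the hole vertex in X i
  set s : ZMod k := (i - c 0) * d with hs
  have hcs : c s.val = i := by
    rw [lin s.val]
    have hval : ((s.val : ℕ) : ZMod k) = s := by
      rw [ZMod.natCast_val, ZMod.cast_id]
    rw [hval, hs]
    linear_combination (i - c 0) * hdd
  refine ⟨f ((s.val : ℕ) : Fin (m + 2)), ⟨⟨_, rfl⟩, ?_⟩, ?_⟩
  · rw [← hcs]; exact hidx _
  · rintro y ⟨⟨p, rfl⟩, hyi⟩
    have hx : f ((s.val : ℕ) : Fin (m + 2)) ∈ X i := by rw [← hcs]; exact hidx _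
    exact congrArg f (uniq i p _ hyi hx)
end

section
/- Let R be a k-ring with good partition (X_1,…,X_k). Then for every i, the graph R − X_i (the induced subgraph on V(R) ∖ X_i) is chordal. -/
open SimpleGraph Set

variable {V : Type*}

/- auxiliary lemmas -/

lemma my_finval3 (m : ℕ) : ((1+1+1 : Fin (m+4)).val) = 3 := by
  simp [Fin.add_def, Fin.val_one]

lemma my_finval2 (m : ℕ) : ((1+1 : Fin (m+4)).val) = 2 := by
  simp [Fin.add_def, Fin.val_one]

lemma my_F3 (m : ℕ) (j : Fin (m+4)) : j ≠ j + 1 + 1 := by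
  intro hh
  have h3 : (j : Fin (m+4)) + 0 = j + (1 + 1) := by rw [add_zero, ← add_assoc]; exact hh
  have h0 := add_left_cancel h3
  have := congrArg Fin.val h0
  rw [my_finval2, Fin.val_zero] at this
  omega

lemma my_F1 (m : ℕ) (j : Fin (m+4)) : (cycleGraph (m+4)).Adj j (j+1) := by
  have : (cycleGraph (m+2+2)).Adj j (j+1) := by
    rw [cycleGraph_adj]; right; exact add_sub_cancel_left j 1
  exact this

lemma my_F2 (m : ℕ) (j : Fin (m+4)) : ¬ (cycleGraph (m+4)).Adj j (j+1+1) := by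
  have : ¬ (cycleGraph (m+2+2)).Adj j (j+1+1) := by
    rw [cycleGraph_adj]
    push_neg
    constructor
    · intro hh
      have hr : j - (j+1+1) = -(1+1) := by abel
      rw [hr] at hh
      have h0 : (0 : Fin (m+4)) = 1 + (1+1) := by
        rw [← neg_add_cancel (1+1 : Fin (m+4)), hh]
      have := congrArg Fin.val h0
      rw [← add_assoc, my_finval3, Fin.val_zero] at this
      omega
    · intro hh
      have hr : j + 1 + 1 - j = 1+1 := by abel
      rw [hr] at hh
      have := congrArg Fin.val hh
      rw [my_finval2, Fin.val_one] at this
      omega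
  exact this

lemma my_zval_succ (k : ℕ) [NeZero k] (z : ZMod k) (h : z + 1 ≠ 0) :
    (z+1).val = z.val + 1 := by
  have hlt : z.val < k := ZMod.val_lt z
  have hne : z.val + 1 ≠ k := by
    intro hh
    apply h
    have : ((z.val + 1 : ℕ) : ZMod k) = 0 := by rw [hh]; exact ZMod.natCast_self k
    rwa [Nat.cast_add, Nat.cast_one, ZMod.natCast_zmod_val] at this
  have : z + 1 = ((z.val + 1 : ℕ) : ZMod k) := by
    rw [Nat.cast_add, Nat.cast_one, ZMod.natCast_zmod_val]
  rw [this, ZMod.val_cast_of_lt (by omega)]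

lemma my_nbhd_symm (G : SimpleGraph V) (v w : V) (h : v ∈ closedNbhd G w) :
    w ∈ closedNbhd G v := by
  rcases Set.mem_insert_iff.mp h with rfl | h
  · exact Set.mem_insert _ _
  · exact Set.mem_insert_iff.mpr (Or.inr h.symm)

theorem stmt6 (G : SimpleGraph V) (k : ℕ) (X : ZMod k → Set V)
    (h : IsRingPartition G k X) :
    ∀ i : ZMod k, IsChordal (G.induce (X i)ᶜ) := by
  obtain ⟨hk4, hne, hdisj, hcover, hstruct⟩ := h
  haveI : NeZero k := ⟨by omega⟩
  -- assign to each vertex its part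
  have hpart : ∀ v : V, ∃ j, v ∈ X j := by
    intro v
    have : v ∈ ⋃ j, X j := by rw [hcover]; exact Set.mem_univ v
    exact Set.mem_iUnion.mp this
  choose p hp using hpart
  have puniq : ∀ {v : V} {j : ZMod k}, v ∈ X j → p v = j := by
    intro v j hv
    by_contra hnej
    exact Set.disjoint_left.mp (hdisj hnej) (hp v) hv
  -- neighborhoods are local
  have hN : ∀ (j : ZMod k) (v : V), v ∈ X j →
      closedNbhd G v ⊆ X (j - 1) ∪ X j ∪ X (j + 1) := by
    intro j v hv
    obtain ⟨nj, u, hui, hur, hmono, hul, hu0⟩ := hstruct j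
    rw [← hur] at hv
    obtain ⟨a, rfl⟩ := hv
    calc closedNbhd G (u a) ⊆ closedNbhd G (u 0) := hmono 0 a (Fin.zero_le a)
      _ = X (j - 1) ∪ X j ∪ X (j + 1) := hu0
  -- each part is a clique (in closed-neighborhood sense)
  have hC : ∀ (j : ZMod k) (v w : V), v ∈ X j → w ∈ X j → w ∈ closedNbhd G v := by
    intro j v w hv hw
    obtain ⟨nj, u, hui, hur, hmono, hul, hu0⟩ := hstruct j
    rw [← hur] at hv
    obtain ⟨a, rfl⟩ := hv
    exact hmono a (Fin.last nj) (Fin.le_last a) (hul hw)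
  -- neighborhoods within a part are comparable
  have hcmp : ∀ (j : ZMod k) (v w : V), v ∈ X j → w ∈ X j →
      closedNbhd G v ⊆ closedNbhd G w ∨ closedNbhd G w ⊆ closedNbhd G v := by
    intro j v w hv hw
    obtain ⟨nj, u, hui, hur, hmono, hul, hu0⟩ := hstruct j
    rw [← hur] at hv hw
    obtain ⟨a, rfl⟩ := hv
    obtain ⟨b, rfl⟩ := hw
    rcases le_total a b with hab | hab
    · exact Or.inr (hmono a b hab)
    · exact Or.inl (hmono b a hab)
  intro i n hn
  obtain ⟨m, rfl⟩ := Nat.exists_eq_add_of_le' hn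
  refine ⟨fun e => ?_⟩
  set f : Fin (m+4) → V := fun j => (e j).1 with hf
  have hfi : Function.Injective f := by
    intro a b hab
    exact e.injective (Subtype.ext hab)
  have hadj : ∀ a b : Fin (m+4), G.Adj (f a) (f b) ↔ (cycleGraph (m+4)).Adj a b := by
    intro a b
    exact e.map_rel_iff
  have hni : ∀ j, f j ∉ X i := fun j => (e j).2
  have hmem : ∀ j, f j ∈ X (p (f j)) := fun j => hp _
  have hpni : ∀ j, p (f j) ≠ i := by
    intro j hh
    exact hni j (hh ▸ hmem j)
  -- no chords: f (l+2) cannot be in the closed neighborhood of f l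
  have chordFalse : ∀ l : Fin (m+4), f (l+1+1) ∈ closedNbhd G (f l) → False := by
    intro l hmem'
    rcases Set.mem_insert_iff.mp hmem' with heq | hadj'
    · exact my_F3 m l (hfi heq).symm
    · exact my_F2 m l ((hadj l (l+1+1)).mp hadj')
  -- adjacency moves by at most one part
  have hstep : ∀ a b : Fin (m+4), G.Adj (f a) (f b) →
      p (f b) = p (f a) - 1 ∨ p (f b) = p (f a) ∨ p (f b) = p (f a) + 1 := by
    intro a b hab
    have h1 : f b ∈ closedNbhd G (f a) := Set.mem_insert_iff.mpr (Or.inr hab)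
    have h2 := hN (p (f a)) (f a) (hmem a) h1
    rcases h2 with (h | h) | h
    · exact Or.inl (puniq h)
    · exact Or.inr (Or.inl (puniq h))
    · exact Or.inr (Or.inr (puniq h))
  by_cases hA : ∃ j : Fin (m+4), p (f j) = p (f (j+1))
  · -- two consecutive cycle vertices in the same part
    obtain ⟨j, hj⟩ := hA
    have hv : f j ∈ X (p (f j)) := hmem j
    have hw : f (j+1) ∈ X (p (f j)) := by rw [hj]; exact hmem (j+1)
    rcases hcmp (p (f j)) (f j) (f (j+1)) hv hw with hsub | hsub
    · -- N[f j] ⊆ N[f (j+1)] : chord from j-1 to j+1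
      obtain ⟨l, rfl⟩ : ∃ l : Fin (m+4), j = l + 1 := ⟨j - 1, (sub_add_cancel j 1).symm⟩
      apply chordFalse l
      apply my_nbhd_symm
      apply hsub
      have : G.Adj (f (l+1)) (f l) := ((hadj l (l+1)).mpr (my_F1 m l)).symm
      exact Set.mem_insert_iff.mpr (Or.inr this)
    · -- N[f (j+1)] ⊆ N[f j] : chord from j to j+2
      apply chordFalse j
      apply hsub
      have : G.Adj (f (j+1)) (f (j+1+1)) := (hadj (j+1) (j+1+1)).mpr (my_F1 m (j+1))
      exact Set.mem_insert_iff.mpr (Or.inr this)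
  · push_neg at hA
    obtain ⟨j0, hmax⟩ := Finite.exists_max (fun j : Fin (m+4) => (p (f j) - i).val)
    obtain ⟨l, rfl⟩ : ∃ l : Fin (m+4), j0 = l + 1 := ⟨j0 - 1, (sub_add_cancel j0 1).symm⟩
    have claim : ∀ b : Fin (m+4), G.Adj (f (l+1)) (f b) → p (f b) ≠ p (f (l+1)) →
        p (f b) = p (f (l+1)) - 1 := by
      intro b hb hneb
      rcases hstep (l+1) b hb with h1 | h2 | h3
      · exact h1
      · exact absurd h2 hneb
      · exfalso
        have hzb : p (f b) - i ≠ 0 := by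
          intro hh
          exact hpni b (by rwa [sub_eq_zero] at hh)
        have hrw : p (f b) - i = (p (f (l+1)) - i) + 1 := by
          rw [h3, sub_add_eq_add_sub]
        have hz : (p (f (l+1)) - i) + 1 ≠ 0 := by rw [← hrw]; exact hzb
        have hsucc := my_zval_succ k _ hz
        have hle := hmax b
        rw [hrw, hsucc] at hle
        omega
    have ha : p (f l) = p (f (l+1)) - 1 := by
      apply claim l ((hadj (l+1) l).mpr ?_) (hA l)
      exact ((my_F1 m l)).symm
    have hb : p (f (l+1+1)) = p (f (l+1)) - 1 := by
      apply claim (l+1+1) ((hadj (l+1) (l+1+1)).mpr (my_F1 m (l+1))) (hA (l+1)).symm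
    apply chordFalse l
    exact hC (p (f (l+1)) - 1) (f l) (f (l+1+1)) (ha ▸ hmem l) (hb ▸ hmem (l+1+1))
end

section
/- A ring R is cap-free if and only if R is a hyperhole. More precisely, if R is a k-ring with good partition (X_1,…,X_k), then R contains no induced cap if and only if for all i, X_i is complete to X_{i+1} (indices modulo k). -/
open SimpleGraph Set

variable {V : Type*}

def HasCap (G : SimpleGraph V) : Prop :=
  ∃ n, 4 ≤ n ∧ ∃ f : cycleGraph n ↪g G, ∃ x, x ∉ Set.range ⇑f ∧
    ∃ j j' : Fin n, (cycleGraph n).Adj j j' ∧ ∀ i : Fin n, G.Adj x (f i) ↔ (i = j ∨ i = j')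

section Aux

variable {G : SimpleGraph V} {k : ℕ} {X : ZMod k → Set V}

lemma rp_exists_part (h : IsRingPartition G k X) (v : V) : ∃ i, v ∈ X i := by
  have := h.2.2.2.1
  have hv : v ∈ ⋃ i, X i := this ▸ Set.mem_univ v
  simpa using hv

lemma rp_part_eq (h : IsRingPartition G k X) {v : V} {i j : ZMod k}
    (hi : v ∈ X i) (hj : v ∈ X j) : i = j := by
  by_contra hne
  exact (h.2.2.1 hne).le_bot ⟨hi, hj⟩ 

lemma rp_closedNbhd_subset (h : IsRingPartition G k X) {v : V} {i : ZMod k}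
    (hv : v ∈ X i) : closedNbhd G v ⊆ X (i - 1) ∪ X i ∪ X (i + 1) := by
  obtain ⟨n, u, -, hrange, hmono, -, hu0⟩ := h.2.2.2.2 i
  rw [← hrange] at hv
  obtain ⟨t, rfl⟩ := hv
  exact hu0 ▸ hmono 0 t (Fin.zero_le t)

lemma rp_adj_part (h : IsRingPartition G k X) {v w : V} {i j : ZMod k}
    (hv : v ∈ X i) (hw : w ∈ X j) (hadj : G.Adj v w) :
    j = i - 1 ∨ j = i ∨ j = i + 1 := by
  have hmem : w ∈ X (i - 1) ∪ X i ∪ X (i + 1) :=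
    rp_closedNbhd_subset h hv (Set.mem_insert_of_mem _ hadj)
  rcases hmem with (h1 | h1) | h1
  · exact Or.inl (rp_part_eq h hw h1)
  · exact Or.inr (Or.inl (rp_part_eq h hw h1))
  · exact Or.inr (Or.inr (rp_part_eq h hw h1))

lemma rp_clique (h : IsRingPartition G k X) {v w : V} {i : ZMod k}
    (hv : v ∈ X i) (hw : w ∈ X i) (hne : v ≠ w) : G.Adj v w := by
  obtain ⟨n, u, -, hrange, hmono, hsub, -⟩ := h.2.2.2.2 i
  rw [← hrange] at hw
  obtain ⟨t, rfl⟩ := hw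
  have hv' : v ∈ closedNbhd G (u t) := hmono t (Fin.last n) (Fin.le_last t) (hsub hv)
  rcases hv' with h1 | h1
  · exact absurd h1 hne
  · exact h1.symm

lemma rp_exists_u0 (h : IsRingPartition G k X) (i : ZMod k) :
    ∃ z, z ∈ X i ∧ closedNbhd G z = X (i - 1) ∪ X i ∪ X (i + 1) := by
  obtain ⟨n, u, -, hrange, -, -, hu0⟩ := h.2.2.2.2 i
  exact ⟨u 0, hrange ▸ Set.mem_range_self 0, hu0⟩

lemma zmod_cast_ne_zero {k : ℕ} (hk : 4 ≤ k) {c : ℕ} (h0 : 0 < c) (h4 : c < 4) :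
    ((c : ℕ) : ZMod k) ≠ 0 := by
  haveI : NeZero k := ⟨by omega⟩
  rw [Ne, ZMod.natCast_eq_zero_iff]
  intro hd
  have := Nat.le_of_dvd h0 hd
  omega

lemma zmod_one_ne {k : ℕ} (hk : 4 ≤ k) : (1 : ZMod k) ≠ 0 := by
  have := zmod_cast_ne_zero hk (c := 1) (by omega) (by omega); simpa using this

lemma zmod_two_ne {k : ℕ} (hk : 4 ≤ k) : (2 : ZMod k) ≠ 0 := by
  have := zmod_cast_ne_zero hk (c := 2) (by omega) (by omega)
  simpa [Nat.cast_ofNat] using this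

lemma zmod_three_ne {k : ℕ} (hk : 4 ≤ k) : (3 : ZMod k) ≠ 0 := by
  have := zmod_cast_ne_zero hk (c := 3) (by omega) (by omega)
  simpa [Nat.cast_ofNat] using this

def zfe (m : ℕ) : ZMod (m + 1) ≃+* Fin (m + 1) := RingEquiv.refl (ZMod (m + 1))

lemma my_one_ne_zero {k : ℕ} (hk : 4 ≤ k) : (1 : ZMod k) ≠ 0 := by
  haveI : NeZero k := ⟨by omega⟩
  have : ((1 : ℕ) : ZMod k) ≠ 0 := by
    rw [Ne, ZMod.natCast_eq_zero_iff]; intro hd; have := Nat.le_of_dvd one_pos hd; omega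
  simpa using this

/-- Build a cap from abstract ZMod-indexed data. -/
lemma buildCap {G : SimpleGraph V} {k : ℕ} (hk : 4 ≤ k) (w : ZMod k → V) (x : V)
    (hinj : Function.Injective w)
    (hadj : ∀ m, G.Adj (w m) (w (m + 1)))
    (hnadj : ∀ a b : ZMod k, b ≠ a + 1 → a ≠ b + 1 → a ≠ b → ¬ G.Adj (w a) (w b))
    (hx : x ∉ Set.range w) (i₀ : ZMod k)
    (hxadj : ∀ m, G.Adj x (w m) ↔ m = i₀ ∨ m = i₀ + 1) : HasCap G := by
  obtain ⟨m, rfl⟩ : ∃ m, k = m + 4 := ⟨k - 4, by omega⟩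
  have e : ZMod (m + 4) ≃+* Fin (m + 4) := zfe (m + 3)
  have hone : e 1 = 1 := map_one e
  -- adjacency characterization over ZMod
  have hAdjIff : ∀ a b : ZMod (m + 4), G.Adj (w a) (w b) ↔ b = a + 1 ∨ a = b + 1 := by
    intro a b
    constructor
    · intro hab
      by_contra hc
      push_neg at hc
      have hne : a ≠ b := by rintro rfl; exact G.irrefl hab
      exact hnadj a b hc.1 hc.2 hne hab
    · rintro (rfl | rfl)
      · exact hadj a
      · exact (hadj b).symm
  -- the graph embedding
  have hmapiff : ∀ a b : Fin (m + 4), G.Adj (w (e.symm a)) (w (e.symm b)) ↔ (cycleGraph (m + 4)).Adj a b := by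
    intro a b
    rw [cycleGraph_adj, hAdjIff]
    constructor
    · rintro (h1 | h1)
      · refine Or.inr ?_
        have : e.symm b - e.symm a = 1 := by rw [h1]; ring
        have := congrArg e this
        simpa [map_sub, hone] using this
      · refine Or.inl ?_
        have : e.symm a - e.symm b = 1 := by rw [h1]; ring
        have := congrArg e this
        simpa [map_sub, hone] using this
    · rintro (h1 | h1)
      · refine Or.inr ?_
        have : e.symm a - e.symm b = 1 := by
          have := congrArg e.symm h1
          simpa [map_sub, map_one] using this
        linear_combination this
      · refine Or.inl ?_
        have : e.symm b - e.symm a = 1 := by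
          have := congrArg e.symm h1
          simpa [map_sub, map_one] using this
        linear_combination this
  refine ⟨m + 4, by omega, ⟨⟨fun a => w (e.symm a), fun a b hab => ?_⟩, fun {a b} => hmapiff a b⟩,
    x, ?_, e i₀, e (i₀ + 1), ?_, ?_⟩
  · have := hinj hab
    exact e.symm.injective this
  · rintro ⟨a, ha⟩
    exact hx ⟨e.symm a, ha⟩
  · rw [← hmapiff]
    simp only [RingEquiv.symm_apply_apply]
    rw [hAdjIff]
    exact Or.inl rfl
  · intro a
    simp only [RelEmbedding.coe_mk, Function.Embedding.coeFn_mk]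
    change G.Adj x (w (e.symm a)) ↔ _; rw [hxadj (e.symm a)]
    constructor
    · rintro (h1 | h1)
      · exact Or.inl (by rw [← h1, RingEquiv.apply_symm_apply])
      · exact Or.inr (by rw [← h1, RingEquiv.apply_symm_apply])
    · rintro (rfl | rfl) <;> simp [RingEquiv.symm_apply_apply]

/-- Extract abstract ZMod-indexed data from a cap. -/
lemma extractCap {G : SimpleGraph V} (h : HasCap G) :
    ∃ n, 4 ≤ n ∧ ∃ (w : ZMod n → V) (x : V), Function.Injective w ∧
      (∀ m, G.Adj (w m) (w (m + 1))) ∧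
      (∀ a b : ZMod n, b ≠ a + 1 → a ≠ b + 1 → a ≠ b → ¬ G.Adj (w a) (w b)) ∧
      x ∉ Set.range w ∧ ∃ i₀ : ZMod n, ∀ m, G.Adj x (w m) ↔ m = i₀ ∨ m = i₀ + 1 := by
  obtain ⟨n, hn, f, x, hx, j, j', hjj, hxadj⟩ := h
  obtain ⟨m, rfl⟩ : ∃ m, n = m + 4 := ⟨n - 4, by omega⟩
  have e : ZMod (m + 4) ≃+* Fin (m + 4) := zfe (m + 3)
  have hone : e 1 = 1 := map_one e
  have h1ne : (1 : ZMod (m + 4)) ≠ 0 := my_one_ne_zero (by omega)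
  refine ⟨m + 4, by omega, fun z => f (e z), x, ?_, ?_, ?_, ?_, ?_⟩
  · exact fun a b hab => e.injective (f.injective hab)
  · intro z
    rw [f.map_rel_iff, cycleGraph_adj]
    refine Or.inr ?_
    rw [map_add e, hone]; abel
  · intro a b h1 h2 h3 hadj
    rw [f.map_rel_iff, cycleGraph_adj] at hadj
    rcases hadj with h4 | h4
    · apply h2
      have := congrArg e.symm h4
      simp only [map_sub, map_one, RingEquiv.symm_apply_apply] at this
      linear_combination this
    · apply h1
      have := congrArg e.symm h4
      simp only [map_sub, map_one, RingEquiv.symm_apply_apply] at this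
      linear_combination this
  · rintro ⟨a, ha⟩; exact hx ⟨e a, ha⟩
  · -- find i₀: either j' = j + 1 or j = j' + 1 (in Fin (m + 4), via e.symm)
    rw [cycleGraph_adj] at hjj
    rcases hjj with h4 | h4
    · -- j - j' = 1, so j = j' + 1 : take i₀ = e.symm j'
      refine ⟨e.symm j', fun z => ?_⟩
      rw [hxadj (e z)]
      have hj : e.symm j = e.symm j' + 1 := by
        have := congrArg e.symm h4
        simp only [map_sub, map_one] at this
        linear_combination this
      constructor
      · rintro (h5 | h5)
        · exact Or.inr (by rw [← hj, ← h5, RingEquiv.symm_apply_apply])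
        · exact Or.inl (by rw [← h5, RingEquiv.symm_apply_apply])
      · rintro (rfl | h5)
        · exact Or.inr (by simp)
        · exact Or.inl (by rw [h5, ← hj]; simp)
    · refine ⟨e.symm j, fun z => ?_⟩
      rw [hxadj (e z)]
      have hj : e.symm j' = e.symm j + 1 := by
        have := congrArg e.symm h4
        simp only [map_sub, map_one] at this
        linear_combination this
      constructor
      · rintro (h5 | h5)
        · exact Or.inl (by rw [← h5, RingEquiv.symm_apply_apply])
        · exact Or.inr (by rw [← hj, ← h5, RingEquiv.symm_apply_apply])
      · rintro (rfl | h5)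
        · exact Or.inl (by simp)
        · exact Or.inr (by rw [h5, ← hj]; simp)

set_option maxHeartbeats 1000000 in
lemma noCap {G : SimpleGraph V} {k : ℕ} {X : ZMod k → Set V}
    (h : IsRingPartition G k X)
    (hcomp : ∀ i : ZMod k, ∀ x ∈ X i, ∀ y ∈ X (i + 1), G.Adj x y) : ¬ HasCap G := by
  intro hc
  obtain ⟨n, hn, w, x, hinj, hadj, hnadj, hx, i₀, hxadj⟩ := extractCap hc
  have hk : 4 ≤ k := h.1
  have k1 : (1 : ZMod k) ≠ 0 := zmod_one_ne hk
  have k2 : (2 : ZMod k) ≠ 0 := zmod_two_ne hk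
  have k3 : (3 : ZMod k) ≠ 0 := zmod_three_ne hk
  have n1 : (1 : ZMod n) ≠ 0 := zmod_one_ne hn
  have n2 : (2 : ZMod n) ≠ 0 := zmod_two_ne hn
  have n3 : (3 : ZMod n) ≠ 0 := zmod_three_ne hn
  set a := w i₀ with ha_def
  set b := w (i₀ + 1) with hb_def
  set c := w (i₀ - 1) with hc_def
  set c' := w (i₀ + 2) with hc'_def
  have hxa : G.Adj x a := (hxadj i₀).2 (Or.inl rfl)
  have hxb : G.Adj x b := (hxadj (i₀ + 1)).2 (Or.inr rfl)
  have hca : G.Adj c a := by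
    have := hadj (i₀ - 1)
    rwa [show i₀ - 1 + 1 = i₀ by ring] at this
  have hbc' : G.Adj b c' := by
    have := hadj (i₀ + 1)
    rwa [show i₀ + 1 + 1 = i₀ + 2 by ring] at this
  have hab : G.Adj a b := hadj i₀
  have hxnc : ¬ G.Adj x c := by
    intro h'
    rcases (hxadj (i₀ - 1)).1 h' with h1 | h1
    · exact n1 (by linear_combination -h1)
    · exact n2 (by linear_combination -h1)
  have hxnc' : ¬ G.Adj x c' := by
    intro h'
    rcases (hxadj (i₀ + 2)).1 h' with h1 | h1
    · exact n2 (by linear_combination h1)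
    · exact n1 (by linear_combination h1)
  have hxnec : x ≠ c := fun he => hx ⟨i₀ - 1, he.symm⟩
  have hxnec' : x ≠ c' := fun he => hx ⟨i₀ + 2, he.symm⟩
  have hncb : ¬ G.Adj c b := by
    refine hnadj (i₀ - 1) (i₀ + 1) ?_ ?_ ?_
    · intro h1; exact n1 (by linear_combination h1)
    · intro h1; exact n3 (by linear_combination -h1)
    · intro h1; exact n2 (by linear_combination -h1)
  have hnc'a : ¬ G.Adj c' a := by
    refine hnadj (i₀ + 2) i₀ ?_ ?_ ?_
    · intro h1; exact n3 (by linear_combination -h1)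
    · intro h1; exact n1 (by linear_combination h1)
    · intro h1; exact n2 (by linear_combination h1)
  obtain ⟨ix, hxX⟩ := rp_exists_part h x
  obtain ⟨pa, haX⟩ := rp_exists_part h a
  obtain ⟨pb, hbX⟩ := rp_exists_part h b
  obtain ⟨pc, hcX⟩ := rp_exists_part h c
  obtain ⟨pc', hc'X⟩ := rp_exists_part h c'
  -- a vertex non-adjacent (and unequal) to x cannot be in X (ix-1), X ix, X (ix+1)
  have excl : ∀ (z : V) (pz : ZMod k), z ∈ X pz → ¬ G.Adj x z → x ≠ z →
      pz ≠ ix - 1 ∧ pz ≠ ix ∧ pz ≠ ix + 1 := by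
    intro z pz hz hnzx hnez
    refine ⟨?_, ?_, ?_⟩
    · rintro rfl
      have hx' : x ∈ X (ix - 1 + 1) := by rwa [show ix - 1 + 1 = ix by ring]
      exact hnzx ((hcomp (ix - 1) z hz x hx').symm)
    · rintro rfl
      exact hnzx (rp_clique h hxX hz hnez)
    · rintro rfl
      exact hnzx (hcomp ix x hxX z hz)
  obtain ⟨hc1, hc2, hc3⟩ := excl c pc hcX hxnc hxnec
  obtain ⟨hc'1, hc'2, hc'3⟩ := excl c' pc' hc'X hxnc' hxnec'
  have hpa3 : pa = ix - 1 ∨ pa = ix ∨ pa = ix + 1 := rp_adj_part h hxX haX hxa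
  have hpb3 : pb = ix - 1 ∨ pb = ix ∨ pb = ix + 1 := rp_adj_part h hxX hbX hxb
  have hpac : pc = pa - 1 ∨ pc = pa ∨ pc = pa + 1 := rp_adj_part h haX hcX hca.symm
  have hpbc' : pc' = pb - 1 ∨ pc' = pb ∨ pc' = pb + 1 := rp_adj_part h hbX hc'X hbc'
  have hpab : pb = pa - 1 ∨ pb = pa ∨ pb = pa + 1 := rp_adj_part h haX hbX hab
  -- pa ≠ ix
  have hpanix : pa ≠ ix := by
    rintro rfl
    rcases hpac with h1 | h1 | h1
    · exact hc1 (by linear_combination h1)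
    · exact hc2 h1
    · exact hc3 h1
  have hpbnix : pb ≠ ix := by
    rintro rfl
    rcases hpbc' with h1 | h1 | h1
    · exact hc'1 (by linear_combination h1)
    · exact hc'2 h1
    · exact hc'3 h1
  have hpa2 : pa = ix - 1 ∨ pa = ix + 1 := by
    rcases hpa3 with h1 | h1 | h1
    exacts [Or.inl h1, absurd h1 hpanix, Or.inr h1]
  have hpb2 : pb = ix - 1 ∨ pb = ix + 1 := by
    rcases hpb3 with h1 | h1 | h1
    exacts [Or.inl h1, absurd h1 hpbnix, Or.inr h1]
  rcases hpa2 with hpa | hpa <;> rcases hpb2 with hpb | hpb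
  · -- pa = pb = ix - 1 : use c' against a
    rcases hpbc' with h1 | h1 | h1
    · -- pc' = pb - 1, so a ∈ X (pc' + 1); Adj c' a by completeness
      have haX' : a ∈ X (pc' + 1) := by
        rwa [show pc' + 1 = pa by rw [h1, hpb, hpa]; ring]
      exact hnc'a (hcomp pc' c' hc'X a haX')
    · exact hc'1 (by rw [h1, hpb])
    · exact hc'2 (by rw [h1, hpb]; ring)
  · -- pa = ix - 1, pb = ix + 1
    rcases hpab with h1 | h1 | h1
    · exact k3 (by linear_combination hpa + h1 - hpb)
    · exact k2 (by linear_combination hpa + h1 - hpb)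
    · exact k1 (by linear_combination hpa + h1 - hpb)
  · -- pa = ix + 1, pb = ix - 1
    rcases hpab with h1 | h1 | h1
    · exact k1 (by linear_combination hpb - hpa - h1)
    · exact k2 (by linear_combination hpb - hpa - h1)
    · exact k3 (by linear_combination hpb - hpa - h1)
  · -- pa = pb = ix + 1 : use c against b
    rcases hpac with h1 | h1 | h1
    · exact hc2 (by rw [h1, hpa]; ring)
    · exact hc3 (by rw [h1, hpa])
    · have hcX' : c ∈ X (pb + 1) := by rwa [show pb + 1 = pc by rw [h1, hpa, hpb]]
      exact hncb (hcomp pb b hbX c hcX').symm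

set_option maxHeartbeats 1000000 in
lemma incompleteCap {G : SimpleGraph V} {k : ℕ} {X : ZMod k → Set V}
    (h : IsRingPartition G k X) {i : ZMod k} {x y : V}
    (hx : x ∈ X i) (hy : y ∈ X (i + 1)) (hnxy : ¬ G.Adj x y) : HasCap G := by
  have hk : 4 ≤ k := h.1
  have k1 : (1 : ZMod k) ≠ 0 := zmod_one_ne hk
  have k2 : (2 : ZMod k) ≠ 0 := zmod_two_ne hk
  have hii1 : i ≠ i + 1 := fun h1 => k1 (by linear_combination -h1)
  have hne11 : ∀ z : ZMod k, z ≠ z + 1 := fun z h1 => k1 (by linear_combination -h1)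
  choose u0 hu0X hu0N using rp_exists_u0 h
  set w : ZMod k → V := fun z => if z = i + 1 then y else u0 z with hw_def
  have hwi : w i = u0 i := by rw [hw_def]; simp [hii1]
  have hwi1 : w (i + 1) = y := by rw [hw_def]; simp
  have hwX : ∀ z, w z ∈ X z := by
    intro z
    by_cases hz : z = i + 1
    · rw [hw_def]; simp only [hz, if_pos rfl]; exact hz ▸ hy
    · rw [hw_def]; simp only [if_neg hz]; exact hu0X z
  have hwinj : Function.Injective w := by
    intro z1 z2 h12
    exact rp_part_eq h (hwX z1) (h12 ▸ hwX z2)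
  -- x ≠ u0 i
  have hxu : x ≠ u0 i := by
    intro he
    have hy' : y ∈ closedNbhd G (u0 i) := by
      rw [hu0N i]
      exact Or.inr hy
    rcases hy' with h1 | h1
    · have hyXi : y ∈ X i := by rw [h1]; exact hu0X i
      exact hii1 (rp_part_eq h hyXi hy)
    · exact hnxy (by rw [he]; exact h1)
  -- adjacency of x with the hole
  have hadjx : ∀ z, G.Adj x (w z) ↔ z = i - 1 ∨ z = i := by
    intro z
    constructor
    · intro h1
      rcases rp_adj_part h hx (hwX z) h1 with h2 | h2 | h2
      · exact Or.inl h2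
      · exact Or.inr h2
      · exfalso
        have hwz : w z = y := by rw [hw_def]; simp [h2]
        exact hnxy (hwz ▸ h1)
    · rintro (rfl | hzi)
      · have hne : i - 1 ≠ i + 1 := fun h1 => k2 (by linear_combination -h1)
        have hwz : w (i - 1) = u0 (i - 1) := by rw [hw_def]; simp [hne]
        have hx' : x ∈ closedNbhd G (u0 (i - 1)) := by
          rw [hu0N (i - 1), show i - 1 + 1 = i by ring]
          exact Or.inr hx
        rcases hx' with h1 | h1
        · exfalso
          have hxm : x ∈ X (i - 1) := by rw [h1]; exact hu0X _
          exact k1 (by linear_combination -(rp_part_eq h hxm hx))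
        · rw [hwz]; exact (h1 : G.Adj (u0 (i - 1)) x).symm
      · rw [hzi]
        have hx' : x ∈ closedNbhd G (u0 i) := by
          rw [hu0N i]
          exact Or.inl (Or.inr hx)
        rcases hx' with h1 | h1
        · exact absurd h1 hxu
        · rw [hwi]; exact (h1 : G.Adj (u0 i) x).symm
  have hxrange : x ∉ Set.range w := by
    rintro ⟨z, hz⟩
    have hz2 : w z ∈ X i := by rw [hz]; exact hx
    have hzi : z = i := rp_part_eq h (hwX z) hz2
    have hz' : w i = x := hzi ▸ hz
    exact hxu (by rw [← hz', hwi])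
  have hadjsucc : ∀ z, G.Adj (w z) (w (z + 1)) := by
    intro z
    by_cases hz : z + 1 = i + 1
    · have hzi : z = i := by linear_combination hz
      rw [hzi, hwi, hwi1]
      have : y ∈ closedNbhd G (u0 i) := by
        rw [hu0N i]
        exact Or.inr hy
      rcases this with h1 | h1
      · exfalso
        have hyXi : y ∈ X i := by rw [h1]; exact hu0X i
        exact hii1 (rp_part_eq h hyXi hy)
      · exact h1
    · have hw2 : w (z + 1) = u0 (z + 1) := by rw [hw_def]; simp [hz]
      have : w z ∈ closedNbhd G (u0 (z + 1)) := by
        rw [hu0N (z + 1), show z + 1 - 1 = z by ring]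
        exact Or.inl (Or.inl (hwX z))
      rcases this with h1 | h1
      · exfalso
        have : w z ∈ X (z + 1) := by rw [h1]; exact hu0X _
        exact hne11 z (rp_part_eq h (hwX z) this)
      · rw [hw2]; exact (h1 : G.Adj (u0 (z + 1)) (w z)).symm
  have hnadj : ∀ a b : ZMod k, b ≠ a + 1 → a ≠ b + 1 → a ≠ b → ¬ G.Adj (w a) (w b) := by
    intro a b h1 h2 h3 hadj'
    rcases rp_adj_part h (hwX a) (hwX b) hadj' with h4 | h4 | h4
    · exact h2 (by linear_combination -h4)
    · exact h3 h4.symm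
    · exact h1 h4
  refine buildCap hk w x hwinj hadjsucc hnadj hxrange (i - 1) ?_
  intro z
  rw [hadjx z, show i - 1 + 1 = i by ring]

end Aux

theorem stmt7 (G : SimpleGraph V) (k : ℕ) (X : ZMod k → Set V)
    (h : IsRingPartition G k X) :
    ¬ HasCap G ↔ ∀ i : ZMod k, ∀ x ∈ X i, ∀ y ∈ X (i + 1), G.Adj x y := by
  constructor
  · intro hnc i x hx y hy
    by_contra hnxy
    exact hnc (incompleteCap h hx hy hnxy)
  · intro hcomp
    exact noCap h hcomp
end

section
/- Every ring R satisfies χ(R) ≤ ⌊(3/2)·ω(R)⌋. In particular, every hyperhole H satisfies χ(H) ≤ ⌊(3/2)·ω(H)⌋. -/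
open SimpleGraph Set

variable {V : Type*}

def IsHyperholePartition (G : SimpleGraph V) (k : ℕ) (X : ZMod k → Set V) : Prop :=
  4 ≤ k ∧ (∀ i, (X i).Nonempty) ∧ (Pairwise fun i j => Disjoint (X i) (X j)) ∧
    (⋃ i, X i) = Set.univ ∧ (∀ i, G.IsClique (X i)) ∧
    (∀ i : ZMod k, ∀ x ∈ X i, ∀ y ∈ X (i + 1), G.Adj x y) ∧
    (∀ i j : ZMod k, j ≠ i - 1 → j ≠ i → j ≠ i + 1 → ∀ x ∈ X i, ∀ y ∈ X j, ¬ G.Adj x y)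

/-! ### Auxiliary machinery -/

/-- The coloring pattern: class `i` (as a natural number `< k`), position `a`.
Classes of even index get ascending colors, odd index descending, and the last
class `k-1` gets a special pattern using the extra `w/2` colors. -/
private def ringCol (k w i a : ℕ) : ℕ :=
  if i = k - 1 then (if a < w / 2 then w + a else a)
  else if i % 2 = 0 then a else w - 1 - a

private lemma ringCol_lt {k w i a : ℕ} (ha : a + 2 ≤ w) :
    ringCol k w i a < w + w / 2 := by
  unfold ringCol; split_ifs <;> omega

private lemma ringCol_ne_same {k w i a b : ℕ} (hab : a ≠ b) (ha : a + 2 ≤ w)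
    (hb : b + 2 ≤ w) : ringCol k w i a ≠ ringCol k w i b := by
  unfold ringCol; split_ifs <;> omega

private lemma ringCol_ne_succ {k w i j a b : ℕ} (hk : 4 ≤ k) (hi : i < k)
    (hj : j = 0 ∧ i = k - 1 ∨ j = i + 1) (hab : a + b + 2 ≤ w) :
    ringCol k w i a ≠ ringCol k w j b := by
  unfold ringCol; split_ifs <;> omega

private lemma zmod_succ_ne {k : ℕ} (hk : 4 ≤ k) (i : ZMod k) : i ≠ i + 1 := by
  haveI : NeZero k := ⟨by omega⟩
  haveI : Fact (1 < k) := ⟨by omega⟩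
  intro h
  have h1 : (1 : ZMod k) = 0 := left_eq_add.mp h
  have := ZMod.val_one k
  rw [h1] at this
  simp at this

private lemma class_eq {k : ℕ} {X : ZMod k → Set V}
    (hdisj : Pairwise fun i j => Disjoint (X i) (X j)) {i j : ZMod k} {v : V}
    (hi : v ∈ X i) (hj : v ∈ X j) : i = j := by
  by_contra hne
  exact Set.disjoint_left.mp (hdisj hne) hi hj

private lemma zmod_val_succ {k : ℕ} (hk : 4 ≤ k) (i : ZMod k) :
    (i + 1).val = 0 ∧ i.val = k - 1 ∨ (i + 1).val = i.val + 1 := by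
  haveI : NeZero k := ⟨by omega⟩
  haveI : Fact (1 < k) := ⟨by omega⟩
  have h1 : (i + 1).val = (i.val + 1) % k := by
    rw [ZMod.val_add, ZMod.val_one]
  have h2 : i.val < k := ZMod.val_lt i
  rcases Nat.lt_or_ge (i.val + 1) k with h | h
  · right; rw [h1, Nat.mod_eq_of_lt h]
  · left
    have hik : i.val + 1 = k := by omega
    constructor
    · rw [h1, hik, Nat.mod_self]
    · omega

/-- Any edge between positions `a` (in class `i`) and `b` (in class `j`) whose
"prefixes" are completely joined yields a clique of size `a + b + 2`. -/
private lemma clique_card_bound [Fintype V] (G : SimpleGraph V) {k : ℕ}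
    {X : ZMod k → Set V} (hdisj : Pairwise fun i j => Disjoint (X i) (X j))
    {n : ZMod k → ℕ} {u : ∀ i, Fin (n i + 1) → V}
    (hinj : ∀ i, Function.Injective (u i)) (hrange : ∀ i, Set.range (u i) = X i)
    {i j : ZMod k} (hij : i ≠ j)
    (a : Fin (n i + 1)) (b : Fin (n j + 1))
    (hWi : ∀ a' b' : Fin (n i + 1), a' ≠ b' → G.Adj (u i a') (u i b'))
    (hWj : ∀ a' b' : Fin (n j + 1), a' ≠ b' → G.Adj (u j a') (u j b'))
    (hcr : ∀ a' ≤ a, ∀ b' ≤ b, G.Adj (u i a') (u j b')) :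
    (a : ℕ) + (b : ℕ) + 2 ≤ G.cliqueNum := by
  classical
  have huX : ∀ (l : ZMod k) (c : Fin (n l + 1)), u l c ∈ X l := fun l c =>
    (hrange l) ▸ Set.mem_range_self c
  set S : Finset V := (Finset.Iic a).image (u i) ∪ (Finset.Iic b).image (u j) with hS
  have hclique : G.IsClique (S : Set V) := by
    intro x hx y hy hxy
    simp only [hS, Finset.coe_union, Set.mem_union, Finset.coe_image, Set.mem_image,
      Finset.mem_coe, Finset.mem_Iic] at hx hy
    rcases hx with ⟨a1, ha1, rfl⟩ | ⟨b1, hb1, rfl⟩ <;>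
      rcases hy with ⟨a2, ha2, rfl⟩ | ⟨b2, hb2, rfl⟩
    · exact hWi a1 a2 (fun h => hxy (by rw [h]))
    · exact hcr a1 ha1 b2 hb2
    · exact (hcr a2 ha2 b1 hb1).symm
    · exact hWj b1 b2 (fun h => hxy (by rw [h]))
  have hdisjS : Disjoint ((Finset.Iic a).image (u i)) ((Finset.Iic b).image (u j)) := by
    rw [Finset.disjoint_left]
    rintro x hx1 hx2
    simp only [Finset.mem_image] at hx1 hx2
    obtain ⟨a1, -, rfl⟩ := hx1
    obtain ⟨b1, -, h⟩ := hx2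
    exact hij (class_eq hdisj (huX i a1) (h ▸ huX j b1))
  have hcard : S.card = (a : ℕ) + 1 + ((b : ℕ) + 1) := by
    rw [hS, Finset.card_union_of_disjoint hdisjS,
      Finset.card_image_of_injective _ (hinj i),
      Finset.card_image_of_injective _ (hinj j), Fin.card_Iic, Fin.card_Iic]
  have hle := SimpleGraph.IsClique.card_le_cliqueNum (G := G) (t := S) (tc := hclique)
  omega

/-- The key abstract coloring lemma. -/
private lemma abstract_colorable [Fintype V] (G : SimpleGraph V) {k : ℕ} (hk : 4 ≤ k)
    (X : ZMod k → Set V)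
    (hdisj : Pairwise fun i j => Disjoint (X i) (X j))
    (hcover : (⋃ i, X i) = Set.univ)
    (n : ZMod k → ℕ) (u : ∀ i, Fin (n i + 1) → V)
    (hrange : ∀ i, Set.range (u i) = X i)
    {w : ℕ}
    (hA : ∀ x y, G.Adj x y → ∃ i, (x ∈ X i ∧ y ∈ X i) ∨ (x ∈ X i ∧ y ∈ X (i + 1)) ∨
      (y ∈ X i ∧ x ∈ X (i + 1)))
    (hB : ∀ (i : ZMod k) (a : Fin (n i + 1)) (b : Fin (n (i + 1) + 1)),
        G.Adj (u i a) (u (i + 1) b) → (a : ℕ) + (b : ℕ) + 2 ≤ w)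
    (hC : ∀ i, n i + 2 ≤ w) :
    G.Colorable (w + w / 2) := by
  classical
  haveI : NeZero k := ⟨by omega⟩
  have huX : ∀ (l : ZMod k) (c : Fin (n l + 1)), u l c ∈ X l := fun l c =>
    (hrange l) ▸ Set.mem_range_self c
  have hmem : ∀ v : V, ∃ i, v ∈ X i := fun v =>
    Set.mem_iUnion.mp (hcover ▸ Set.mem_univ v)
  let idx : V → ZMod k := fun v => (hmem v).choose
  have hidx : ∀ v, v ∈ X (idx v) := fun v => (hmem v).choose_spec
  have hpos' : ∀ v, ∃ a : Fin (n (idx v) + 1), u (idx v) a = v := by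
    intro v
    have h := hidx v
    rw [← hrange] at h
    exact h
  let pos : ∀ v, Fin (n (idx v) + 1) := fun v => (hpos' v).choose
  have hpos : ∀ v, u (idx v) (pos v) = v := fun v => (hpos' v).choose_spec
  have key : ∀ (i j : ZMod k) (a : Fin (n i + 1)) (b : Fin (n j + 1)),
      G.Adj (u i a) (u j b) →
      ringCol k w i.val (a : ℕ) ≠ ringCol k w j.val (b : ℕ) := by
    intro i j a b hadj
    obtain ⟨i0, hcase⟩ := hA _ _ hadj
    rcases hcase with ⟨hx, hy⟩ | ⟨hx, hy⟩ | ⟨hy, hx⟩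
    · -- same class
      have hii : i = i0 := class_eq hdisj (huX i a) hx
      subst hii
      have hjj : j = i := class_eq hdisj (huX j b) hy
      subst hjj
      have hab : a ≠ b := by
        intro h
        exact G.ne_of_adj hadj (by rw [h])
      have h1 : (a : ℕ) ≤ n j := Fin.is_le a
      have h2 : (b : ℕ) ≤ n j := Fin.is_le b
      have h3 := hC j
      exact ringCol_ne_same (fun h => hab (Fin.ext h)) (by omega) (by omega)
    · -- x ∈ X i0, y ∈ X (i0+1)
      have hii : i = i0 := class_eq hdisj (huX i a) hx
      subst hii
      have hjj : j = i + 1 := class_eq hdisj (huX j b) hy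
      subst hjj
      have hsum := hB i a b hadj
      exact ringCol_ne_succ hk (ZMod.val_lt i) (zmod_val_succ hk i) hsum
    · -- y ∈ X i0, x ∈ X (i0+1)
      have hjj : j = i0 := class_eq hdisj (huX j b) hy
      subst hjj
      have hii : i = j + 1 := class_eq hdisj (huX i a) hx
      subst hii
      have hsum := hB j b a hadj.symm
      exact (ringCol_ne_succ hk (ZMod.val_lt j) (zmod_val_succ hk j) hsum).symm
  refine ⟨SimpleGraph.Coloring.mk
    (fun v => ⟨ringCol k w (idx v).val ((pos v : ℕ)), ?_⟩) ?_⟩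
  · have h1 : ((pos v : ℕ)) ≤ n (idx v) := Fin.is_le _
    have h2 := hC (idx v)
    exact ringCol_lt (by omega)
  · intro x y hadj h
    have hadj' : G.Adj (u (idx x) (pos x)) (u (idx y) (pos y)) := by
      rw [hpos x, hpos y]; exact hadj
    exact key (idx x) (idx y) (pos x) (pos y) hadj' (congrArg Fin.val h)

private lemma ring_colorable [Fintype V] (G : SimpleGraph V) {k : ℕ}
    {X : ZMod k → Set V} (hR : IsRingPartition G k X) :
    G.Colorable (G.cliqueNum + G.cliqueNum / 2) := by
  classical
  obtain ⟨hk, hXne, hdisj, hcover, hstruct⟩ := hR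
  choose n u hinj hrange hmono hlast h0 using hstruct
  have huX : ∀ (l : ZMod k) (c : Fin (n l + 1)), u l c ∈ X l := fun l c =>
    (hrange l) ▸ Set.mem_range_self c
  have cn_mem : ∀ {x y : V}, y ∈ closedNbhd G x ↔ y = x ∨ G.Adj x y := by
    intro x y
    simp [closedNbhd, Set.mem_insert_iff, SimpleGraph.mem_neighborSet]
  have adj_of_mem : ∀ {i j : ZMod k} (_ : i ≠ j) (a : Fin (n i + 1)) (b : Fin (n j + 1)),
      u j b ∈ closedNbhd G (u i a) → G.Adj (u i a) (u j b) := by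
    intro i j hij a b hm
    rcases cn_mem.mp hm with h | h
    · exact absurd (class_eq hdisj (h ▸ huX j b) (huX i a)) (Ne.symm hij)
    · exact h
  -- within-class adjacency
  have hW : ∀ (i : ZMod k) (a b : Fin (n i + 1)), a ≠ b → G.Adj (u i a) (u i b) := by
    intro i a b hab
    have h1 : u i b ∈ closedNbhd G (u i a) :=
      hmono i a (Fin.last _) (Fin.le_last a) (hlast i (huX i b))
    rcases cn_mem.mp h1 with h | h
    · exact absurd (hinj i h) (Ne.symm hab)
    · exact h
  -- cross monotone adjacency
  have hcross : ∀ (i : ZMod k) (a a' : Fin (n i + 1)) (b b' : Fin (n (i + 1) + 1)),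
      G.Adj (u i a) (u (i + 1) b) → a' ≤ a → b' ≤ b →
      G.Adj (u i a') (u (i + 1) b') := by
    intro i a a' b b' hadj ha hb
    have hne : i ≠ i + 1 := zmod_succ_ne hk i
    have s1 : u (i + 1) b ∈ closedNbhd G (u i a') :=
      hmono i a' a ha (cn_mem.mpr (Or.inr hadj))
    have s2 : G.Adj (u i a') (u (i + 1) b) := adj_of_mem hne a' b s1
    have s3 : u i a' ∈ closedNbhd G (u (i + 1) b') :=
      hmono (i + 1) b' b hb (cn_mem.mpr (Or.inr s2.symm))
    exact (adj_of_mem (Ne.symm hne) b' a' s3).symm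
  -- the edge between last of X i and first of X (i+1)
  have hEdge : ∀ i : ZMod k, G.Adj (u i (Fin.last (n i))) (u (i + 1) 0) := by
    intro i
    have h1 : u i (Fin.last (n i)) ∈ closedNbhd G (u (i + 1) 0) := by
      rw [h0 (i + 1)]
      have : (i + 1) - 1 = i := by ring
      rw [this]
      exact Or.inl (Or.inl (huX i (Fin.last (n i))))
    exact (adj_of_mem (Ne.symm (zmod_succ_ne hk i)) 0 (Fin.last (n i)) h1).symm
  have hB : ∀ (i : ZMod k) (a : Fin (n i + 1)) (b : Fin (n (i + 1) + 1)),
      G.Adj (u i a) (u (i + 1) b) → (a : ℕ) + (b : ℕ) + 2 ≤ G.cliqueNum := by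
    intro i a b hadj
    exact clique_card_bound G hdisj hinj hrange (zmod_succ_ne hk i) a b
      (hW i) (hW (i + 1)) (fun a' ha' b' hb' => hcross i a a' b b' hadj ha' hb')
  have hC : ∀ i : ZMod k, n i + 2 ≤ G.cliqueNum := by
    intro i
    have := hB i (Fin.last (n i)) 0 (hEdge i)
    simpa using this
  have hA : ∀ x y, G.Adj x y → ∃ i, (x ∈ X i ∧ y ∈ X i) ∨ (x ∈ X i ∧ y ∈ X (i + 1)) ∨
      (y ∈ X i ∧ x ∈ X (i + 1)) := by
    intro x y hadj
    obtain ⟨i, hx⟩ := Set.mem_iUnion.mp (hcover ▸ Set.mem_univ x)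
    rw [← hrange i] at hx
    obtain ⟨a, rfl⟩ := hx
    have h1 : y ∈ closedNbhd G (u i 0) :=
      hmono i 0 a (Fin.zero_le a) (cn_mem.mpr (Or.inr hadj))
    rw [h0 i] at h1
    rcases h1 with (h | h) | h
    · refine ⟨i - 1, Or.inr (Or.inr ⟨h, ?_⟩)⟩
      rw [sub_add_cancel]
      exact huX i a
    · exact ⟨i, Or.inl ⟨huX i a, h⟩⟩
    · exact ⟨i, Or.inr (Or.inl ⟨huX i a, h⟩)⟩
  exact abstract_colorable G hk X hdisj hcover n u hrange hA hB hC

private lemma hyperhole_colorable [Fintype V] (G : SimpleGraph V) {k : ℕ}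
    {X : ZMod k → Set V} (hH : IsHyperholePartition G k X) :
    G.Colorable (G.cliqueNum + G.cliqueNum / 2) := by
  classical
  obtain ⟨hk, hXne, hdisj, hcover, hcliq, hcomp, hanti⟩ := hH
  -- enumerate each class
  have hfin : ∀ i : ZMod k, (X i).Finite := fun i => Set.toFinite (X i)
  set F : ZMod k → Finset V := fun i => (hfin i).toFinset with hF
  have hFmem : ∀ (i : ZMod k) (x : V), x ∈ F i ↔ x ∈ X i := fun i x =>
    (hfin i).mem_toFinset
  have hFpos : ∀ i, 1 ≤ (F i).card := by
    intro i
    obtain ⟨x, hx⟩ := hXne i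
    exact Finset.card_pos.mpr ⟨x, (hFmem i x).mpr hx⟩
  set n : ZMod k → ℕ := fun i => (F i).card - 1 with hn
  have hcard : ∀ i, n i + 1 = (F i).card := fun i => by
    have := hFpos i
    show (F i).card - 1 + 1 = (F i).card
    omega
  set u : ∀ i : ZMod k, Fin (n i + 1) → V := fun i a =>
    ((F i).equivFin.symm (Fin.cast (hcard i) a) : V) with hu
  have hinj : ∀ i, Function.Injective (u i) := by
    intro i a b h
    have h2 := (F i).equivFin.symm.injective (Subtype.ext h)
    exact Fin.cast_injective _ h2
  have hrange : ∀ i, Set.range (u i) = X i := by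
    intro i
    ext x
    constructor
    · rintro ⟨a, rfl⟩
      exact (hFmem i _).mp ((F i).equivFin.symm (Fin.cast (hcard i) a)).2
    · intro hx
      refine ⟨Fin.cast (hcard i).symm ((F i).equivFin ⟨x, (hFmem i x).mpr hx⟩), ?_⟩
      simp [hu]
  have huX : ∀ (l : ZMod k) (c : Fin (n l + 1)), u l c ∈ X l := fun l c =>
    (hrange l) ▸ Set.mem_range_self c
  have hW : ∀ (i : ZMod k) (a b : Fin (n i + 1)), a ≠ b → G.Adj (u i a) (u i b) := by
    intro i a b hab
    exact hcliq i (huX i a) (huX i b) (fun h => hab (hinj i h))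
  have hB : ∀ (i : ZMod k) (a : Fin (n i + 1)) (b : Fin (n (i + 1) + 1)),
      G.Adj (u i a) (u (i + 1) b) → (a : ℕ) + (b : ℕ) + 2 ≤ G.cliqueNum := by
    intro i a b _
    exact clique_card_bound G hdisj hinj hrange (zmod_succ_ne hk i) a b
      (hW i) (hW (i + 1))
      (fun a' _ b' _ => hcomp i (u i a') (huX i a') (u (i + 1) b') (huX (i + 1) b'))
  have hC : ∀ i : ZMod k, n i + 2 ≤ G.cliqueNum := by
    intro i
    have := hB i (Fin.last (n i)) 0
      (hcomp i _ (huX i (Fin.last (n i))) _ (huX (i + 1) 0))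
    simpa using this
  have hA : ∀ x y, G.Adj x y → ∃ i, (x ∈ X i ∧ y ∈ X i) ∨ (x ∈ X i ∧ y ∈ X (i + 1)) ∨
      (y ∈ X i ∧ x ∈ X (i + 1)) := by
    intro x y hadj
    obtain ⟨i, hx⟩ := Set.mem_iUnion.mp (hcover ▸ Set.mem_univ x)
    obtain ⟨j, hy⟩ := Set.mem_iUnion.mp (hcover ▸ Set.mem_univ y)
    by_cases h1 : j = i
    · exact ⟨i, Or.inl ⟨hx, h1 ▸ hy⟩⟩
    by_cases h2 : j = i + 1
    · exact ⟨i, Or.inr (Or.inl ⟨hx, h2 ▸ hy⟩)⟩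
    by_cases h3 : j = i - 1
    · refine ⟨i - 1, Or.inr (Or.inr ⟨h3 ▸ hy, ?_⟩)⟩
      rw [sub_add_cancel]
      exact hx
    · exact absurd hadj (hanti i j h3 h1 h2 x hx y hy)
  exact abstract_colorable G hk X hdisj hcover n u hrange hA hB hC

theorem stmt11 [Fintype V] (G : SimpleGraph V)
    (h : (∃ (k : ℕ) (X : ZMod k → Set V), IsRingPartition G k X) ∨
         (∃ (k : ℕ) (X : ZMod k → Set V), IsHyperholePartition G k X)) :
    G.chromaticNumber ≤ ((3 * G.cliqueNum / 2 : ℕ) : ℕ∞) := by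
  have hcol : G.Colorable (G.cliqueNum + G.cliqueNum / 2) := by
    rcases h with ⟨k, X, hR⟩ | ⟨k, X, hH⟩
    · exact ring_colorable G hR
    · exact hyperhole_colorable G hH
  have heq : 3 * G.cliqueNum / 2 = G.cliqueNum + G.cliqueNum / 2 := by omega
  rw [heq]
  exact hcol.chromaticNumber_le
end

section
/- Every 7-hyperantihole G satisfies χ(G) ≤ ⌊(4/3)·ω(G)⌋. -/
open SimpleGraph Set

variable {V : Type*}

def IsHyperantiholePartition (G : SimpleGraph V) (k : ℕ) (X : ZMod k → Set V) : Prop :=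
  4 ≤ k ∧ (∀ i, (X i).Nonempty) ∧ (Pairwise fun i j => Disjoint (X i) (X j)) ∧
    (⋃ i, X i) = Set.univ ∧ (∀ i, G.IsClique (X i)) ∧
    (∀ i : ZMod k, ∀ x ∈ X i, ∀ y ∈ X (i + 1), ¬ G.Adj x y) ∧
    (∀ i j : ZMod k, j ≠ i - 1 → j ≠ i → j ≠ i + 1 → ∀ x ∈ X i, ∀ y ∈ X j, G.Adj x y)

lemma zeroCase : ∀ n t y1 y2 y3 y4 y5 y6 : ℕ,
    y1+y2+y3+y4+y5+y6 = n → 1 ≤ t → 2*t ≤ n →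
    y2+y4+t ≤ n → y1+y3+y5+t ≤ n → y2+y4+y6+t ≤ n → y3+y5+t ≤ n →
    y4+y6+y1+t ≤ n → y5+y2+t ≤ n → y6+y1+y3+t ≤ n →
    (1 ≤ y1 → 1 ≤ y2 → n ≤ y3+y5+t) →
    (1 ≤ y2 → 1 ≤ y3 → n ≤ y4+y6+y1+t) →
    (1 ≤ y3 → 1 ≤ y4 → n ≤ y5+y2+t) →
    (1 ≤ y4 → 1 ≤ y5 → n ≤ y6+y1+y3+t) →
    (1 ≤ y5 → 1 ≤ y6 → n ≤ y2+y4+t) → False := by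
  intro n t y1 y2 y3 y4 y5 y6 hs ht h0 h1 h2 h3 h4 h5 h6 h7 c2 c3 c4 c5 c6
  omega

lemma matchM : ∀ n t x0 x1 x2 x3 x4 x5 x6 : ℕ, x0+x1+x2+x3+x4+x5+x6 = n →
    2*t ≤ n →
    x0+x2+x4+t ≤ n → x1+x3+x5+t ≤ n → x2+x4+x6+t ≤ n → x3+x5+x0+t ≤ n →
    x4+x6+x1+t ≤ n → x5+x0+x2+t ≤ n → x6+x1+x3+t ≤ n →
    ∃ a0 a1 a2 a3 a4 a5 a6 : ℕ,
      a6+a0 ≤ x0 ∧ a0+a1 ≤ x1 ∧ a1+a2 ≤ x2 ∧ a2+a3 ≤ x3 ∧ a3+a4 ≤ x4 ∧ a4+a5 ≤ x5 ∧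
      a5+a6 ≤ x6 ∧ t ≤ a0+a1+a2+a3+a4+a5+a6 := by
  intro n
  induction n using Nat.strong_induction_on with
  | _ n IH =>
    intro t x0 x1 x2 x3 x4 x5 x6 hs h0 h1 h2 h3 h4 h5 h6 h7
    rcases Nat.eq_zero_or_pos t with ht | ht
    · exact ⟨0,0,0,0,0,0,0, by omega⟩
    · have hn2 : n - 2 < n := by omega
      have hedge :
          (1 ≤ x0 ∧ 1 ≤ x1 ∧ x2+x4+x6+t+1 ≤ n) ∨
          (1 ≤ x1 ∧ 1 ≤ x2 ∧ x3+x5+x0+t+1 ≤ n) ∨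
          (1 ≤ x2 ∧ 1 ≤ x3 ∧ x4+x6+x1+t+1 ≤ n) ∨
          (1 ≤ x3 ∧ 1 ≤ x4 ∧ x5+x0+x2+t+1 ≤ n) ∨
          (1 ≤ x4 ∧ 1 ≤ x5 ∧ x6+x1+x3+t+1 ≤ n) ∨
          (1 ≤ x5 ∧ 1 ≤ x6 ∧ x0+x2+x4+t+1 ≤ n) ∨
          (1 ≤ x6 ∧ 1 ≤ x0 ∧ x1+x3+x5+t+1 ≤ n) := by
        by_contra hc
        push_neg at hc
        obtain ⟨c1,c2,c3,c4,c5,c6,c7⟩ := hc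
        have hz : x0 = 0 ∨ x1 = 0 ∨ x2 = 0 ∨ x3 = 0 ∨ x4 = 0 ∨ x5 = 0 ∨ x6 = 0 ∨
            (1 ≤ x0 ∧ 1 ≤ x1 ∧ 1 ≤ x2 ∧ 1 ≤ x3 ∧ 1 ≤ x4 ∧ 1 ≤ x5 ∧ 1 ≤ x6) := by omega
        rcases hz with hz|hz|hz|hz|hz|hz|hz|⟨p0,p1,p2,p3,p4,p5,p6⟩
        · exact zeroCase n t x1 x2 x3 x4 x5 x6 (by omega) ht h0 (by omega) (by omega)
            (by omega) (by omega) (by omega) (by omega) (by omega)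
            (fun p q => by have := c2 p q; omega) (fun p q => by have := c3 p q; omega)
            (fun p q => by have := c4 p q; omega) (fun p q => by have := c5 p q; omega)
            (fun p q => by have := c6 p q; omega)
        · exact zeroCase n t x2 x3 x4 x5 x6 x0 (by omega) ht h0 (by omega) (by omega)
            (by omega) (by omega) (by omega) (by omega) (by omega)
            (fun p q => by have := c3 p q; omega) (fun p q => by have := c4 p q; omega)
            (fun p q => by have := c5 p q; omega) (fun p q => by have := c6 p q; omega)
            (fun p q => by have := c7 p q; omega)
        · exact zeroCase n t x3 x4 x5 x6 x0 x1 (by omega) ht h0 (by omega) (by omega)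
            (by omega) (by omega) (by omega) (by omega) (by omega)
            (fun p q => by have := c4 p q; omega) (fun p q => by have := c5 p q; omega)
            (fun p q => by have := c6 p q; omega) (fun p q => by have := c7 p q; omega)
            (fun p q => by have := c1 p q; omega)
        · exact zeroCase n t x4 x5 x6 x0 x1 x2 (by omega) ht h0 (by omega) (by omega)
            (by omega) (by omega) (by omega) (by omega) (by omega)
            (fun p q => by have := c5 p q; omega) (fun p q => by have := c6 p q; omega)
            (fun p q => by have := c7 p q; omega) (fun p q => by have := c1 p q; omega)
            (fun p q => by have := c2 p q; omega)
        · exact zeroCase n t x5 x6 x0 x1 x2 x3 (by omega) ht h0 (by omega) (by omega)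
            (by omega) (by omega) (by omega) (by omega) (by omega)
            (fun p q => by have := c6 p q; omega) (fun p q => by have := c7 p q; omega)
            (fun p q => by have := c1 p q; omega) (fun p q => by have := c2 p q; omega)
            (fun p q => by have := c3 p q; omega)
        · exact zeroCase n t x6 x0 x1 x2 x3 x4 (by omega) ht h0 (by omega) (by omega)
            (by omega) (by omega) (by omega) (by omega) (by omega)
            (fun p q => by have := c7 p q; omega) (fun p q => by have := c1 p q; omega)
            (fun p q => by have := c2 p q; omega) (fun p q => by have := c3 p q; omega)
            (fun p q => by have := c4 p q; omega)
        · exact zeroCase n t x0 x1 x2 x3 x4 x5 (by omega) ht h0 (by omega) (by omega)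
            (by omega) (by omega) (by omega) (by omega) (by omega)
            (fun p q => by have := c1 p q; omega) (fun p q => by have := c2 p q; omega)
            (fun p q => by have := c3 p q; omega) (fun p q => by have := c4 p q; omega)
            (fun p q => by have := c5 p q; omega)
        · have d1 := c1 p0 p1
          have d2 := c2 p1 p2
          have d3 := c3 p2 p3
          have d4 := c4 p3 p4
          have d5 := c5 p4 p5
          have d6 := c6 p5 p6
          have d7 := c7 p6 p0
          omega
      rcases hedge with ⟨e1,e2,e3⟩|⟨e1,e2,e3⟩|⟨e1,e2,e3⟩|⟨e1,e2,e3⟩|⟨e1,e2,e3⟩|⟨e1,e2,e3⟩|⟨e1,e2,e3⟩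
      · obtain ⟨a0,a1,a2,a3,a4,a5,a6,c⟩ := IH (n-2) hn2 (t-1) (x0-1) (x1-1) x2 x3 x4 x5 x6
          (by omega) (by omega) (by omega) (by omega) (by omega) (by omega) (by omega)
          (by omega) (by omega)
        exact ⟨a0+1,a1,a2,a3,a4,a5,a6, by omega⟩
      · obtain ⟨a0,a1,a2,a3,a4,a5,a6,c⟩ := IH (n-2) hn2 (t-1) x0 (x1-1) (x2-1) x3 x4 x5 x6
          (by omega) (by omega) (by omega) (by omega) (by omega) (by omega) (by omega)
          (by omega) (by omega)
        exact ⟨a0,a1+1,a2,a3,a4,a5,a6, by omega⟩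
      · obtain ⟨a0,a1,a2,a3,a4,a5,a6,c⟩ := IH (n-2) hn2 (t-1) x0 x1 (x2-1) (x3-1) x4 x5 x6
          (by omega) (by omega) (by omega) (by omega) (by omega) (by omega) (by omega)
          (by omega) (by omega)
        exact ⟨a0,a1,a2+1,a3,a4,a5,a6, by omega⟩
      · obtain ⟨a0,a1,a2,a3,a4,a5,a6,c⟩ := IH (n-2) hn2 (t-1) x0 x1 x2 (x3-1) (x4-1) x5 x6
          (by omega) (by omega) (by omega) (by omega) (by omega) (by omega) (by omega)
          (by omega) (by omega)
        exact ⟨a0,a1,a2,a3+1,a4,a5,a6, by omega⟩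
      · obtain ⟨a0,a1,a2,a3,a4,a5,a6,c⟩ := IH (n-2) hn2 (t-1) x0 x1 x2 x3 (x4-1) (x5-1) x6
          (by omega) (by omega) (by omega) (by omega) (by omega) (by omega) (by omega)
          (by omega) (by omega)
        exact ⟨a0,a1,a2,a3,a4+1,a5,a6, by omega⟩
      · obtain ⟨a0,a1,a2,a3,a4,a5,a6,c⟩ := IH (n-2) hn2 (t-1) x0 x1 x2 x3 x4 (x5-1) (x6-1)
          (by omega) (by omega) (by omega) (by omega) (by omega) (by omega) (by omega)
          (by omega) (by omega)
        exact ⟨a0,a1,a2,a3,a4,a5+1,a6, by omega⟩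
      · obtain ⟨a0,a1,a2,a3,a4,a5,a6,c⟩ := IH (n-2) hn2 (t-1) (x0-1) x1 x2 x3 x4 x5 (x6-1)
          (by omega) (by omega) (by omega) (by omega) (by omega) (by omega) (by omega)
          (by omega) (by omega)
        exact ⟨a0,a1,a2,a3,a4,a5,a6+1, by omega⟩

theorem stmt12 [Fintype V] (G : SimpleGraph V) (X : ZMod 7 → Set V)
    (h : IsHyperantiholePartition G 7 X) :
    G.chromaticNumber ≤ ((4 * G.cliqueNum / 3 : ℕ) : ℕ∞) := by
  classical
  obtain ⟨-, hne, hdisj, hcover, hclq, hanti, hcomp⟩ := h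
  set ω := G.cliqueNum with hw
  set x : ZMod 7 → ℕ := fun i => (X i).ncard with hxdef
  -- distance lemma in ZMod 7
  have hshift : ∀ (k c : ZMod 7), k + c - k = c := by intro k c; ring
  have hadjc : ∀ (k c : ZMod 7), c ≠ -1 → c ≠ 0 → c ≠ 1 →
      ∀ u ∈ X k, ∀ v ∈ X (k + c), G.Adj u v := by
    intro k c h1 h2 h3 u hu v hv
    refine hcomp k (k + c) ?_ ?_ ?_ u hu v hv
    · exact fun hcon => h1 (by rw [← hshift k c, hcon]; ring)
    · exact fun hcon => h2 (by rw [← hshift k c, hcon]; ring)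
    · exact fun hcon => h3 (by rw [← hshift k c, hcon]; ring)
  have hdisjc : ∀ (k c : ZMod 7), c ≠ 0 → Disjoint (X k) (X (k + c)) := by
    intro k c hc
    exact hdisj (fun hcon => hc (by rw [← hshift k c, ← hcon]; ring))
  -- each triple of pairwise-far parts gives a clique
  have hclique3 : ∀ i : ZMod 7, x i + x (i + 2) + x (i + 4) ≤ ω := by
    intro i
    have h24 : i + 4 = (i + 2) + 2 := by ring
    have hcl : G.IsClique (X i ∪ X (i+2) ∪ X (i+4)) := by
      intro u hu v hv huv
      rcases hu with (hu | hu) | hu <;> rcases hv with (hv | hv) | hv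
      · exact hclq i hu hv huv
      · exact hadjc i 2 (by decide) (by decide) (by decide) u hu v hv
      · exact hadjc i 4 (by decide) (by decide) (by decide) u hu v hv
      · exact (hadjc i 2 (by decide) (by decide) (by decide) v hv u hu).symm
      · exact hclq (i+2) hu hv huv
      · exact hadjc (i+2) 2 (by decide) (by decide) (by decide) u hu v (h24 ▸ hv)
      · exact (hadjc i 4 (by decide) (by decide) (by decide) v hv u hu).symm
      · exact (hadjc (i+2) 2 (by decide) (by decide) (by decide) v hv u (h24 ▸ hu)).symm
      · exact hclq (i+4) hu hv huv
    have hd1 : Disjoint (X i) (X (i+2)) := hdisjc i 2 (by decide)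
    have hd2 : Disjoint (X i) (X (i+4)) := hdisjc i 4 (by decide)
    have hd3 : Disjoint (X (i+2)) (X (i+4)) := h24 ▸ hdisjc (i+2) 2 (by decide)
    have hcard : (X i ∪ X (i+2) ∪ X (i+4)).ncard = x i + x (i+2) + x (i+4) := by
      rw [Set.ncard_union_eq (Disjoint.union_left hd2 hd3) ((Set.toFinite _).union
        (Set.toFinite _)) (Set.toFinite _), Set.ncard_union_eq hd1 (Set.toFinite _)
        (Set.toFinite _)]
    have hclf : G.IsClique ((X i ∪ X (i+2) ∪ X (i+4)).toFinset : Set V) := by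
      rwa [Set.coe_toFinset]
    have := hclf.card_le_cliqueNum
    rwa [← Set.ncard_eq_toFinset_card', hcard] at this
  -- index of the part containing a vertex
  have hexists : ∀ v : V, ∃ i, v ∈ X i := by
    intro v
    have : v ∈ ⋃ i, X i := by rw [hcover]; trivial
    exact Set.mem_iUnion.mp this
  choose idx hidx using hexists
  have hidx_eq : ∀ v i, v ∈ X i → idx v = i := by
    intro v i hvi
    by_contra hne'
    exact Set.disjoint_left.mp (hdisj hne') (hidx v) hvi
  -- enumeration of each part
  obtain ⟨e⟩ : Nonempty (∀ i : ZMod 7, ↥(X i) ≃ Fin (x i)) :=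
    ⟨fun i => Finite.equivFinOfCardEq (Nat.card_coe_set_eq _)⟩
  obtain ⟨pos, hposdef⟩ : ∃ pos : V → ℕ, ∀ v, pos v = (e (idx v) ⟨v, hidx v⟩ : Fin _).val :=
    ⟨fun v => (e (idx v) ⟨v, hidx v⟩ : Fin _).val, fun _ => rfl⟩
  have hposlt : ∀ v, pos v < x (idx v) := by
    intro v; rw [hposdef]; exact (e (idx v) ⟨v, hidx v⟩).isLt
  have hpos_eq : ∀ (v : V) (i : ZMod 7) (hvi : v ∈ X i), pos v = (e i ⟨v, hvi⟩ : Fin _).val := by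
    intro v i hvi
    have h' := hidx_eq v i hvi
    subst h'
    rw [hposdef]
  have hinj : ∀ (i : ZMod 7) (u v : V), u ∈ X i → v ∈ X i → pos u = pos v → u = v := by
    intro i u v hu hv hpq
    rw [hpos_eq u i hu, hpos_eq v i hv] at hpq
    have := (e i).injective (Fin.val_injective hpq)
    exact congrArg Subtype.val this
  -- the matching
  set n : ℕ := x 0 + x 1 + x 2 + x 3 + x 4 + x 5 + x 6 with hn
  set t : ℕ := n - 4 * ω / 3 with ht
  have r7 : ((7 : ZMod 7)) = 0 := by decide
  have r8 : ((8 : ZMod 7)) = 1 := by decide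
  have r9 : ((9 : ZMod 7)) = 2 := by decide
  have r10 : ((10 : ZMod 7)) = 3 := by decide
  have T0 : x 0 + x 2 + x 4 ≤ ω := by have := hclique3 0; norm_num at this; exact this
  have T1 : x 1 + x 3 + x 5 ≤ ω := by have := hclique3 1; norm_num at this; exact this
  have T2 : x 2 + x 4 + x 6 ≤ ω := by have := hclique3 2; norm_num at this; exact this
  have T3 : x 3 + x 5 + x 0 ≤ ω := by have := hclique3 3; norm_num [r7] at this; exact this
  have T4 : x 4 + x 6 + x 1 ≤ ω := by have := hclique3 4; norm_num [r8] at this; exact this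
  have T5 : x 5 + x 0 + x 2 ≤ ω := by have := hclique3 5; norm_num [r7, r9] at this; exact this
  have T6 : x 6 + x 1 + x 3 ≤ ω := by have := hclique3 6; norm_num [r8, r10] at this; exact this
  have h3n : 3 * n ≤ 7 * ω := by omega
  obtain ⟨a0, a1, a2, a3, a4, a5, a6, hc0, hc1, hc2, hc3, hc4, hc5, hc6, hcsum⟩ :=
    matchM n t (x 0) (x 1) (x 2) (x 3) (x 4) (x 5) (x 6) hn.symm (by omega) (by omega)
      (by omega) (by omega) (by omega) (by omega) (by omega) (by omega)
  set af : ZMod 7 → ℕ := fun i =>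
    if i.val = 0 then a0 else if i.val = 1 then a1 else if i.val = 2 then a2 else
    if i.val = 3 then a3 else if i.val = 4 then a4 else if i.val = 5 then a5 else a6
    with hafdef
  have ea0 : af 0 = a0 := rfl
  have ea1 : af 1 = a1 := rfl
  have ea2 : af 2 = a2 := rfl
  have ea3 : af 3 = a3 := rfl
  have ea4 : af 4 = a4 := rfl
  have ea5 : af 5 = a5 := rfl
  have ea6 : af 6 = a6 := rfl
  have ha : ∀ i : ZMod 7, af (i - 1) + af i ≤ x i := by
    intro i
    fin_cases i
    · exact hc0
    · exact hc1
    · exact hc2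
    · exact hc3
    · exact hc4
    · exact hc5
    · exact hc6
  -- offsets
  have hcast : ∀ m : ZMod 7, ((m.val : ℕ) : ZMod 7) = m :=
    fun m => (ZMod.natCast_val m).trans (ZMod.cast_id 7 m)
  set offF : ZMod 7 → ℕ :=
    fun i => ∑ j ∈ Finset.range i.val, (x ((j : ℕ) : ZMod 7) - af (((j : ℕ) : ZMod 7) - 1))
    with hoffF
  set total : ℕ :=
    ∑ j ∈ Finset.range 7, (x ((j : ℕ) : ZMod 7) - af (((j : ℕ) : ZMod 7) - 1)) with htotal
  have hmono : ∀ k : ZMod 7, ∀ m : ℕ, k.val < m → m ≤ 7 →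
      offF k + (x k - af (k - 1)) ≤
        ∑ j ∈ Finset.range m, (x ((j : ℕ) : ZMod 7) - af (((j : ℕ) : ZMod 7) - 1)) := by
    intro k m hkm hm7
    have step : ∑ j ∈ Finset.range (k.val + 1), (x ((j : ℕ) : ZMod 7) -
        af (((j : ℕ) : ZMod 7) - 1)) = offF k + (x k - af (k - 1)) := by
      rw [Finset.sum_range_succ, hcast k, hoffF]
    rw [← step]
    exact Finset.sum_le_sum_of_subset (Finset.range_subset_range.mpr (by omega))
  have htot : ∀ k : ZMod 7, offF k + (x k - af (k - 1)) ≤ total := by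
    intro k
    exact hmono k 7 k.val_lt (le_refl 7)
  have huniq : ∀ (k l : ZMod 7) (c : ℕ), offF k ≤ c → c < offF k + (x k - af (k - 1)) →
      offF l ≤ c → c < offF l + (x l - af (l - 1)) → k = l := by
    intro k l c h1 h2 h3 h4
    rcases lt_trichotomy k.val l.val with hlt | heq | hlt
    · have h5 := hmono k l.val hlt l.val_lt.le
      have h6 : offF l = ∑ j ∈ Finset.range l.val,
          (x ((j : ℕ) : ZMod 7) - af (((j : ℕ) : ZMod 7) - 1)) := rfl
      rw [← h6] at h5
      omega
    · have := congrArg (fun m : ℕ => ((m : ℕ) : ZMod 7)) heq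
      simpa only [hcast] using this
    · have h5 := hmono l k.val hlt k.val_lt.le
      have h6 : offF k = ∑ j ∈ Finset.range k.val,
          (x ((j : ℕ) : ZMod 7) - af (((j : ℕ) : ZMod 7) - 1)) := rfl
      rw [← h6] at h5
      omega
  -- the coloring
  set C : V → ℕ := fun v =>
    if pos v < af (idx v - 1) then
      offF (idx v - 1) + (x (idx v - 1) - af (idx v - 1) + pos v - af (idx v - 1 - 1))
    else offF (idx v) + (pos v - af (idx v - 1)) with hC
  have hCblockL : ∀ v : V, pos v < af (idx v - 1) →
      offF (idx v - 1) ≤ C v ∧ C v < offF (idx v - 1) + (x (idx v - 1) - af (idx v - 1 - 1)) := by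
    intro v hb
    have h1 := ha (idx v - 1)
    rw [hC]
    simp only [if_pos hb]
    omega
  have hCblockR : ∀ v : V, ¬ pos v < af (idx v - 1) →
      offF (idx v) ≤ C v ∧ C v < offF (idx v) + (x (idx v) - af (idx v - 1)) := by
    intro v hb
    have h1 := ha (idx v)
    have h2 := hposlt v
    rw [hC]
    simp only [if_neg hb]
    omega
  have hsucc : ∀ k : ZMod 7, k - 1 + 1 = k := by intro k; ring
  -- properness
  have hproper : ∀ u v : V, G.Adj u v → C u ≠ C v := by
    intro u v hadj heq
    have hu := hidx u
    have hv := hidx v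
    by_cases h1 : pos u < af (idx u - 1) <;> by_cases h2 : pos v < af (idx v - 1)
    · -- both shared: blocks idx u - 1 = idx v - 1
      obtain ⟨bu1, bu2⟩ := hCblockL u h1
      obtain ⟨bv1, bv2⟩ := hCblockL v h2
      have hkey : idx u - 1 = idx v - 1 :=
        huniq _ _ (C u) bu1 bu2 (heq ▸ bv1) (heq ▸ bv2)
      have hij : idx u = idx v := by
        have := congrArg (fun z => z + 1) hkey
        simpa only [hsucc] using this
      have hku := ha (idx u - 1)
      rw [← hij] at h2
      have heq' : C u = C v := heq
      simp only [hC, ← hij, if_pos h1, if_pos h2] at heq'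
      have hpuv : pos u = pos v := by omega
      exact hadj.ne (hinj (idx u) u v hu (hij ▸ hv) hpuv)
    · -- u shared, v own: idx u - 1 = idx v, so idx u = idx v + 1
      obtain ⟨bu1, bu2⟩ := hCblockL u h1
      obtain ⟨bv1, bv2⟩ := hCblockR v h2
      have hkey : idx u - 1 = idx v :=
        huniq _ _ (C u) bu1 bu2 (heq ▸ bv1) (heq ▸ bv2)
      have hij : idx u = idx v + 1 := by
        have := congrArg (fun z => z + 1) hkey
        simpa only [hsucc] using this
      exact hanti (idx v) v hv u (hij ▸ hu) hadj.symm
    · -- u own, v shared: idx v = idx u + 1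
      obtain ⟨bu1, bu2⟩ := hCblockR u h1
      obtain ⟨bv1, bv2⟩ := hCblockL v h2
      have hkey : idx u = idx v - 1 :=
        huniq _ _ (C u) bu1 bu2 (heq ▸ bv1) (heq ▸ bv2)
      have hij : idx v = idx u + 1 := by
        have := congrArg (fun z => z + 1) hkey.symm
        simpa only [hsucc] using this
      exact hanti (idx u) u hu v (hij ▸ hv) hadj
    · -- both own: same part
      obtain ⟨bu1, bu2⟩ := hCblockR u h1
      obtain ⟨bv1, bv2⟩ := hCblockR v h2
      have hij : idx u = idx v :=
        huniq _ _ (C u) bu1 bu2 (heq ▸ bv1) (heq ▸ bv2)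
      have hku := ha (idx u)
      have hpu := hposlt u
      have hpv := hposlt v
      rw [← hij] at h2 hpv
      have heq' : C u = C v := heq
      simp only [hC, ← hij, if_neg h1, if_neg h2] at heq'
      have hpuv : pos u = pos v := by omega
      exact hadj.ne (hinj (idx u) u v hu (hij ▸ hv) hpuv)
  -- color bound
  have hbound : ∀ v : V, C v < total := by
    intro v
    by_cases h1 : pos v < af (idx v - 1)
    · have := (hCblockL v h1).2
      have := htot (idx v - 1)
      omega
    · have := (hCblockR v h1).2
      have := htot (idx v)
      omega
  -- total ≤ 4ω/3
  have s0 : ((0 : ZMod 7) - 1) = 6 := by decide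
  have s1 : ((1 : ZMod 7) - 1) = 0 := by decide
  have s2 : ((2 : ZMod 7) - 1) = 1 := by decide
  have s3 : ((3 : ZMod 7) - 1) = 2 := by decide
  have s4 : ((4 : ZMod 7) - 1) = 3 := by decide
  have s5 : ((5 : ZMod 7) - 1) = 4 := by decide
  have s6 : ((6 : ZMod 7) - 1) = 5 := by decide
  have sm1 : ((-1 : ZMod 7)) = 6 := by decide
  have htoteq : total = (x 0 - af 6) + (x 1 - af 0) + (x 2 - af 1) + (x 3 - af 2) +
      (x 4 - af 3) + (x 5 - af 4) + (x 6 - af 5) := by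
    rw [htotal]
    rw [Finset.sum_range_succ, Finset.sum_range_succ, Finset.sum_range_succ,
      Finset.sum_range_succ, Finset.sum_range_succ, Finset.sum_range_succ,
      Finset.sum_range_succ, Finset.sum_range_zero]
    simp only [Nat.cast_zero, Nat.cast_one, Nat.cast_ofNat, s0, s1, s2, s3, s4, s5, s6, zero_add]
  have htotle : total ≤ 4 * ω / 3 := by
    rw [htoteq, ea0, ea1, ea2, ea3, ea4, ea5, ea6]
    omega
  -- conclude
  have hcolorable : G.Colorable (4 * ω / 3) := by
    rw [G.colorable_iff_exists_bdd_nat_coloring]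
    exact ⟨SimpleGraph.Coloring.mk C (fun {u v} hadj => hproper u v hadj),
      fun v => lt_of_lt_of_le (hbound v) htotle⟩
  exact hcolorable.chromaticNumber_le
end

section
/- Let (G, w) be a weighted graph and (A, B, C) a clique-cut-partition of G. Define a weight function w_B on B ∪ C by w_B(v) = w(v) for v ∈ B and, for c ∈ C, w_B(c) = α(G[A ∪ {c}], w) − α(G[A], w) (differences of maximum weights of stable sets). Let S_B be a maximum-weight stable set of (G[B ∪ C], w_B) all of whose vertices have strictly positive w_B-weight, let C̃ = S_B ∩ C, and let S_{A∪C̃} be a maximum-weight stable set of (G[A ∪ C̃], w). Then |C̃| ≤ 1 and S_{A∪C̃} ∪ S_B is a maximum-weight stable set of (G, w). -/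
open SimpleGraph Set

variable {V : Type*}

noncomputable def maxWeightStable (G : SimpleGraph V) (w : V → ℝ) (T : Set V) : ℝ :=
  sSup {x | ∃ S : Finset V, ↑S ⊆ T ∧ IsStableSet G ↑S ∧ x = ∑ v ∈ S, w v}

lemma mws_bddAbove [Fintype V] (G : SimpleGraph V) (w : V → ℝ) (T : Set V) :
    BddAbove {x | ∃ S : Finset V, ↑S ⊆ T ∧ IsStableSet G ↑S ∧ x = ∑ v ∈ S, w v} := by
  apply Set.Finite.bddAbove
  apply (Set.finite_range (fun S : Finset V => ∑ v ∈ S, w v)).subset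
  rintro x ⟨S, _, _, rfl⟩
  exact ⟨S, rfl⟩

lemma le_mws [Fintype V] {G : SimpleGraph V} {w : V → ℝ} {T : Set V} {S : Finset V}
    (h1 : ↑S ⊆ T) (h2 : IsStableSet G ↑S) :
    ∑ v ∈ S, w v ≤ maxWeightStable G w T :=
  le_csSup (mws_bddAbove G w T) ⟨S, h1, h2, rfl⟩

lemma stable_subset {G : SimpleGraph V} {S T : Set V} (h : IsStableSet G T) (hsub : S ⊆ T) :
    IsStableSet G S := h.mono hsub

lemma stable_clique_card [DecidableEq V] {G : SimpleGraph V} {C : Set V}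
    (hclq : G.IsClique C) {S T : Finset V} (hst : IsStableSet G ↑S)
    (hTC : (↑T : Set V) ⊆ C) (hTS : T ⊆ S) : T.card ≤ 1 := by
  rw [Finset.card_le_one]
  intro a ha b hb
  by_contra hne
  exact hst (Finset.mem_coe.mpr (hTS ha)) (Finset.mem_coe.mpr (hTS hb)) hne
    (hclq (hTC (Finset.mem_coe.mpr ha)) (hTC (Finset.mem_coe.mpr hb)) hne)

theorem stmt16 [Fintype V] [DecidableEq V] (G : SimpleGraph V) (w : V → ℝ)
    (A B C : Set V) (hpart : CliqueCutPartition G A B C)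
    (wB : V → ℝ)
    (hwB_B : ∀ v ∈ B, wB v = w v)
    (hwB_C : ∀ c ∈ C, wB c = maxWeightStable G w (A ∪ {c}) - maxWeightStable G w A)
    (SB : Finset V) (hSB_sub : ↑SB ⊆ B ∪ C) (hSB_st : IsStableSet G ↑SB)
    (hSB_max : ∑ v ∈ SB, wB v = maxWeightStable G wB (B ∪ C))
    (hSB_pos : ∀ v ∈ SB, 0 < wB v)
    (Ct : Finset V) (hCt : ↑Ct = ↑SB ∩ C)
    (SA : Finset V) (hSA_sub : ↑SA ⊆ A ∪ ↑Ct) (hSA_st : IsStableSet G ↑SA)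
    (hSA_max : ∑ v ∈ SA, w v = maxWeightStable G w (A ∪ ↑Ct)) :
    Ct.card ≤ 1 ∧ IsStableSet G ↑(SA ∪ SB) ∧
      ∑ v ∈ SA ∪ SB, w v = maxWeightStable G w Set.univ := by
  classical
  obtain ⟨⟨hA, hB, hAB, hAC, hBC, hcover, hcut⟩, hclq⟩ := hpart
  set αA := maxWeightStable G w A with hαA
  set M := maxWeightStable G wB (B ∪ C) with hM
  have hCtSB : Ct ⊆ SB := by
    intro x hx
    have : (x : V) ∈ (↑Ct : Set V) := Finset.mem_coe.mpr hx
    rw [hCt] at this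
    exact Finset.mem_coe.mp this.1
  have hCtC : (↑Ct : Set V) ⊆ C := by
    rw [hCt]; exact Set.inter_subset_right
  have hCt1 : Ct.card ≤ 1 := stable_clique_card hclq hSB_st hCtC hCtSB
  -- Upper bound: every stable set of G has weight at most αA + M
  have hub : ∀ x ∈ {x | ∃ S : Finset V, ↑S ⊆ (Set.univ : Set V) ∧ IsStableSet G ↑S ∧
      x = ∑ v ∈ S, w v}, x ≤ αA + M := by
    rintro x ⟨S, -, hSst, rfl⟩
    set Sa := S.filter (· ∈ A) with hSa
    set Sb := S.filter (· ∈ B) with hSb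
    set Sc := S.filter (· ∈ C) with hSc
    have hSaA : (↑Sa : Set V) ⊆ A := by intro v hv; exact (Finset.mem_filter.mp hv).2
    have hSbB : (↑Sb : Set V) ⊆ B := by intro v hv; exact (Finset.mem_filter.mp hv).2
    have hScC : (↑Sc : Set V) ⊆ C := by intro v hv; exact (Finset.mem_filter.mp hv).2
    have hSaS : Sa ⊆ S := Finset.filter_subset _ _
    have hSbS : Sb ⊆ S := Finset.filter_subset _ _
    have hScS : Sc ⊆ S := Finset.filter_subset _ _
    have hdisj_ab : Disjoint Sa Sb := by
      rw [Finset.disjoint_left]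
      intro v hva hvb
      exact hAB.ne_of_mem (hSaA hva) (hSbB hvb) rfl
    have hdisj_abc : Disjoint (Sa ∪ Sb) Sc := by
      rw [Finset.disjoint_left]
      intro v hv hvc
      rcases Finset.mem_union.mp hv with h | h
      · exact hAC.ne_of_mem (hSaA h) (hScC hvc) rfl
      · exact hBC.ne_of_mem (hSbB h) (hScC hvc) rfl
    have hSeq : S = Sa ∪ Sb ∪ Sc := by
      ext v
      simp only [Finset.mem_union, hSa, hSb, hSc, Finset.mem_filter]
      constructor
      · intro hv
        have : v ∈ A ∪ B ∪ C := by rw [hcover]; trivial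
        rcases this with (h | h) | h
        · exact Or.inl (Or.inl ⟨hv, h⟩)
        · exact Or.inl (Or.inr ⟨hv, h⟩)
        · exact Or.inr ⟨hv, h⟩
      · rintro ((⟨h, -⟩ | ⟨h, -⟩) | ⟨h, -⟩) <;> exact h
    have hsum : ∑ v ∈ S, w v = ∑ v ∈ Sa, w v + ∑ v ∈ Sb, w v + ∑ v ∈ Sc, w v := by
      rw [hSeq, Finset.sum_union hdisj_abc, Finset.sum_union hdisj_ab]
    have hSc1 : Sc.card ≤ 1 := stable_clique_card hclq hSst hScC hScS
    have hwBSb : ∑ v ∈ Sb, wB v = ∑ v ∈ Sb, w v :=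
      Finset.sum_congr rfl fun v hv => hwB_B v (hSbB hv)
    rcases Sc.eq_empty_or_nonempty with hScE | ⟨c', hc'⟩
    · have h1 : ∑ v ∈ Sa, w v ≤ αA :=
        le_mws hSaA (stable_subset hSst (by exact_mod_cast Finset.coe_subset.mpr hSaS))
      have h2 : ∑ v ∈ Sb, wB v ≤ M :=
        le_mws (hSbB.trans Set.subset_union_left)
          (stable_subset hSst (by exact_mod_cast Finset.coe_subset.mpr hSbS))
      rw [hsum, hScE, Finset.sum_empty]
      linarith [hwBSb ▸ h2]
    · have hSceq : Sc = {c'} := Finset.eq_singleton_iff_unique_mem.mpr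
        ⟨hc', fun b hb => Finset.card_le_one.mp hSc1 b hb c' hc'⟩
      have hc'C : c' ∈ C := hScC (Finset.mem_coe.mpr hc')
      have hc'S : c' ∈ S := hScS hc'
      have hc'A : c' ∉ Sa := fun h => hAC.ne_of_mem (hSaA h) hc'C rfl
      have hc'B : c' ∉ Sb := fun h => hBC.ne_of_mem (hSbB h) hc'C rfl
      -- A part
      have hIa : (↑(insert c' Sa) : Set V) ⊆ A ∪ {c'} := by
        intro v hv
        rcases Finset.mem_insert.mp (Finset.mem_coe.mp hv) with rfl | h
        · exact Or.inr rfl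
        · exact Or.inl (hSaA h)
      have hIa_st : IsStableSet G ↑(insert c' Sa) :=
        stable_subset hSst (by
          intro v hv
          rcases Finset.mem_insert.mp (Finset.mem_coe.mp hv) with rfl | h
          · exact hc'S
          · exact hSaS h)
      have h1 : w c' + ∑ v ∈ Sa, w v ≤ αA + wB c' := by
        have := le_mws (G := G) (w := w) hIa hIa_st
        rw [Finset.sum_insert hc'A] at this
        rw [hwB_C c' hc'C]
        linarith
      -- B part
      have hIb : (↑(insert c' Sb) : Set V) ⊆ B ∪ C := by
        intro v hv
        rcases Finset.mem_insert.mp (Finset.mem_coe.mp hv) with rfl | h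
        · exact Or.inr hc'C
        · exact Or.inl (hSbB h)
      have hIb_st : IsStableSet G ↑(insert c' Sb) :=
        stable_subset hSst (by
          intro v hv
          rcases Finset.mem_insert.mp (Finset.mem_coe.mp hv) with rfl | h
          · exact hc'S
          · exact hSbS h)
      have h2 : wB c' + ∑ v ∈ Sb, w v ≤ M := by
        have := le_mws (G := G) (w := wB) hIb hIb_st
        rw [Finset.sum_insert hc'B, hwBSb] at this
        exact this
      rw [hsum, hSceq, Finset.sum_singleton]
      linarith
  -- Stability and value, by cases on Ct
  have hmain : IsStableSet G ↑(SA ∪ SB) ∧ ∑ v ∈ SA ∪ SB, w v = αA + M := by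
    rcases Ct.eq_empty_or_nonempty with hE | ⟨c, hc⟩
    · have hCtE : (↑Ct : Set V) = ∅ := by rw [hE]; simp
      have hSAA : (↑SA : Set V) ⊆ A := by
        intro v hv
        rcases hSA_sub hv with h | h
        · exact h
        · rw [hCtE] at h; exact absurd h (Set.notMem_empty v)
      have hSBB : (↑SB : Set V) ⊆ B := by
        intro v hv
        rcases hSB_sub hv with h | h
        · exact h
        · exfalso
          have : v ∈ (↑Ct : Set V) := by rw [hCt]; exact ⟨hv, h⟩
          rw [hCtE] at this; exact this
      have hdisj : Disjoint SA SB := by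
        rw [Finset.disjoint_left]
        intro v hva hvb
        exact hAB.ne_of_mem (hSAA hva) (hSBB hvb) rfl
      constructor
      · intro x hx y hy hne
        rw [Finset.coe_union] at hx hy
        rcases hx with hx | hx <;> rcases hy with hy | hy
        · exact hSA_st hx hy hne
        · exact hcut x (hSAA hx) y (hSBB hy)
        · exact fun h => hcut y (hSAA hy) x (hSBB hx) h.symm
        · exact hSB_st hx hy hne
      · rw [Finset.sum_union hdisj]
        have h1 : ∑ v ∈ SA, w v = αA := by
          rw [hSA_max, hCtE, Set.union_empty]
        have h2 : ∑ v ∈ SB, w v = M := by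
          rw [← hSB_max]
          exact (Finset.sum_congr rfl fun v hv => (hwB_B v (hSBB hv)).symm)
        rw [h1, h2]
    · have hCteq : Ct = {c} := Finset.eq_singleton_iff_unique_mem.mpr
        ⟨hc, fun b hb => Finset.card_le_one.mp hCt1 b hb c hc⟩
      have hcSB : c ∈ SB := hCtSB hc
      have hcC : c ∈ C := hCtC (Finset.mem_coe.mpr hc)
      have hSBC : (↑SB : Set V) ∩ C = {c} := by
        rw [← hCt, hCteq]; simp
      have hCts : (↑Ct : Set V) = {c} := by rw [hCteq]; simp
      have hSAsub : (↑SA : Set V) ⊆ A ∪ {c} := by rw [← hCts]; exact hSA_sub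
      have hSAval : ∑ v ∈ SA, w v = maxWeightStable G w (A ∪ {c}) := by
        rw [hSA_max, hCts]
      have hwc : wB c = maxWeightStable G w (A ∪ {c}) - αA := hwB_C c hcC
      have hwcpos : 0 < wB c := hSB_pos c hcSB
      have hcSA : c ∈ SA := by
        by_contra h
        have hsubA : (↑SA : Set V) ⊆ A := by
          intro v hv
          rcases hSAsub hv with hva | hvc
          · exact hva
          · exact absurd (hvc ▸ hv : c ∈ (↑SA : Set V)) (by exact_mod_cast h)
        have := le_mws (w := w) hsubA hSA_st
        rw [hSAval] at this
        linarith
      have hSBdiff : ∀ x ∈ SB, x ≠ c → x ∈ B := by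
        intro x hx hne
        rcases hSB_sub (Finset.mem_coe.mpr hx) with h | h
        · exact h
        · exact absurd (show x ∈ ({c} : Set V) from hSBC ▸ ⟨Finset.mem_coe.mpr hx, h⟩) hne
      have hcross : ∀ x ∈ SA, ∀ y ∈ SB, x ≠ y → ¬ G.Adj x y := by
        intro x hx y hy hne hadj
        by_cases hyc : y = c
        · subst hyc
          exact hSA_st (Finset.mem_coe.mpr hx) (Finset.mem_coe.mpr hcSA) hne hadj
        · have hyB : y ∈ B := hSBdiff y hy hyc
          rcases hSAsub (Finset.mem_coe.mpr hx) with hxA | hxc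
          · exact hcut x hxA y hyB hadj
          · have : x = c := hxc
            subst this
            exact hSB_st (Finset.mem_coe.mpr hcSB) (Finset.mem_coe.mpr hy) hne hadj
      constructor
      · intro x hx y hy hne
        rw [Finset.coe_union] at hx hy
        rcases hx with hx | hx <;> rcases hy with hy | hy
        · exact hSA_st hx hy hne
        · exact hcross x hx y hy hne
        · exact fun h => hcross y hy x hx hne.symm h.symm
        · exact hSB_st hx hy hne
      · have hinter : SA ∩ SB = {c} := by
          ext v
          simp only [Finset.mem_inter, Finset.mem_singleton]
          constructor
          · rintro ⟨hva, hvb⟩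
            rcases hSAsub (Finset.mem_coe.mpr hva) with h | h
            · exfalso
              rcases hSB_sub (Finset.mem_coe.mpr hvb) with h' | h'
              · exact hAB.ne_of_mem h h' rfl
              · exact hAC.ne_of_mem h h' rfl
            · exact h
          · rintro rfl; exact ⟨hcSA, hcSB⟩
        have hsum : ∑ v ∈ SA ∪ SB, w v + w c = ∑ v ∈ SA, w v + ∑ v ∈ SB, w v := by
          have := Finset.sum_union_inter (s₁ := SA) (s₂ := SB) (f := w)
          rw [hinter, Finset.sum_singleton] at this
          exact this
        have herase : ∀ f : V → ℝ, ∑ v ∈ SB, f v = f c + ∑ v ∈ SB.erase c, f v :=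
          fun f => (Finset.add_sum_erase _ f hcSB).symm
        have heraseB : ∑ v ∈ SB.erase c, wB v = ∑ v ∈ SB.erase c, w v :=
          Finset.sum_congr rfl fun v hv =>
            hwB_B v (hSBdiff v (Finset.mem_of_mem_erase hv) (Finset.ne_of_mem_erase hv))
        have hMval : wB c + ∑ v ∈ SB.erase c, w v = M := by
          rw [← heraseB, ← herase wB]; exact hSB_max
        have hSAv : ∑ v ∈ SA, w v = αA + wB c := by rw [hSAval]; linarith [hwc]
        have hSBv := herase w
        linarith
  refine ⟨hCt1, hmain.1, ?_⟩
  have hle : ∑ v ∈ SA ∪ SB, w v ≤ maxWeightStable G w Set.univ :=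
    le_mws (by simp) hmain.1
  have hne : {x | ∃ S : Finset V, ↑S ⊆ (Set.univ : Set V) ∧ IsStableSet G ↑S ∧
      x = ∑ v ∈ S, w v}.Nonempty :=
    ⟨0, ∅, by simp, by simp [IsStableSet], by simp⟩
  have hge : maxWeightStable G w Set.univ ≤ αA + M := csSup_le hne hub
  linarith [hmain.2]
end

section
/- No wheel admits a clique-cutset. That is, if H is a hole (induced cycle of length at least 4) and x a vertex adjacent to at least three vertices of H, then the graph induced on V(H) ∪ {x} has no clique whose removal disconnects it. -/
open SimpleGraph Set
open scoped Fin.CommRing Fin.NatCast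

variable {V : Type*}

/-- A set in the cycle on `m+2 ≥ 4` vertices, any two distinct elements of which are
consecutive, is contained in a pair of consecutive vertices. -/
lemma fin_cover {m : ℕ} (hn : 4 ≤ m + 2) (D : Set (Fin (m + 2)))
    (h : ∀ a ∈ D, ∀ b ∈ D, a ≠ b → b = a + 1 ∨ a = b + 1) :
    ∃ d : Fin (m + 2), ∀ i ∈ D, i = d ∨ i = d + 1 := by
  have hjz : ∀ j : ℕ, 0 < j → j < m + 2 → (↑j : Fin (m + 2)) ≠ 0 := by
    intro j hj1 hj2 hj0
    rw [Fin.natCast_eq_zero] at hj0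
    exact absurd (Nat.le_of_dvd hj1 hj0) (by omega)
  have key : ∀ p : Fin (m + 2), p ∈ D → p + 1 ∈ D →
      ∀ c ∈ D, c = p ∨ c = p + 1 := by
    intro p hp hp1 c hc
    by_cases hcp : c = p
    · exact Or.inl hcp
    by_cases hcp1 : c = p + 1
    · exact Or.inr hcp1
    exfalso
    have h1 : p = c + 1 := by
      rcases h c hc p hp hcp with h1 | h1
      · exact h1
      · exact absurd h1 hcp1
    have h2 : c = p + 1 + 1 := by
      rcases h c hc (p + 1) hp1 (fun he => hcp1 (he)) with h2 | h2
      · exact absurd (add_right_cancel h2).symm hcp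
      · exact h2
    have h3 : p + 0 = p + 3 := by
      nth_rewrite 1 [h1, h2]; ring
    have h4 : (0 : Fin (m + 2)) = 3 := add_left_cancel h3
    have := hjz 3 (by omega) (by omega)
    rw [show ((3 : ℕ) : Fin (m + 2)) = 3 by push_cast; ring] at this
    exact this h4.symm
  by_cases hD : D.Nonempty
  · obtain ⟨a, ha⟩ := hD
    by_cases hb : ∃ b ∈ D, b ≠ a
    · obtain ⟨b, hbD, hba⟩ := hb
      rcases h b hbD a ha hba with hab | hab
      · exact ⟨b, key b hbD (hab ▸ ha) ⟩
      · exact ⟨a, key a ha (hab ▸ hbD)⟩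
    · push_neg at hb
      exact ⟨a, fun c hc => Or.inl (hb c hc)⟩
  · rw [Set.not_nonempty_iff_eq_empty] at hD
    exact ⟨0, by simp [hD]⟩

theorem stmt18 (G : SimpleGraph V) (n : ℕ) (hn : 4 ≤ n)
    (f : cycleGraph n ↪g G) (x : V) (hx : x ∉ Set.range ⇑f)
    (hdeg : 3 ≤ {i : Fin n | G.Adj x (f i)}.ncard) :
    ¬ HasCliqueCutset (G.induce (Set.range ⇑f ∪ {x})) := by
  obtain ⟨m, rfl⟩ : ∃ m, n = m + 2 := ⟨n - 2, by omega⟩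
  set S : Set V := Set.range ⇑f ∪ {x} with hS
  rintro ⟨A, B, C, ⟨⟨hA, hB, hAB, hAC, hBC, huniv, hedge⟩, hclique⟩⟩
  set vi : Fin (m + 2) → ↑S := fun i => ⟨f i, Or.inl ⟨i, rfl⟩⟩ with hvi
  set xx : ↑S := ⟨x, Or.inr rfl⟩ with hxx
  have hjz : ∀ j : ℕ, 0 < j → j < m + 2 → (↑j : Fin (m + 2)) ≠ 0 := by
    intro j hj1 hj2 hj0
    rw [Fin.natCast_eq_zero] at hj0
    exact absurd (Nat.le_of_dvd hj1 hj0) (by omega)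
  have hfinj : Function.Injective ⇑f := f.injective
  have hvixx : ∀ i, vi i ≠ xx := fun i h => hx ⟨i, congrArg Subtype.val h⟩
  have hSmem : ∀ s : ↑S, (∃ i, s = vi i) ∨ s = xx := by
    rintro ⟨v, hv⟩
    rcases hv with ⟨i, rfl⟩ | hv
    · exact Or.inl ⟨i, rfl⟩
    · exact Or.inr (Subtype.ext hv)
  have hadjvv : ∀ i j : Fin (m + 2), (cycleGraph (m + 2)).Adj i j →
      (G.induce S).Adj (vi i) (vi j) := by
    intro i j h
    simp only [comap_adj, hvi]
    exact f.map_rel_iff.mpr h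
  -- the set of hole indices in the cutset C
  set D : Set (Fin (m + 2)) := {i | vi i ∈ C} with hD
  obtain ⟨d, hd⟩ : ∃ d : Fin (m + 2), ∀ i ∈ D, i = d ∨ i = d + 1 := by
    apply fin_cover hn
    intro a haD b hbD hab
    have hne : vi a ≠ vi b := fun h => hab (hfinj (congrArg Subtype.val h))
    have := hclique haD hbD hne
    simp only [comap_adj, hvi] at this
    have := f.map_rel_iff.mp this
    rw [cycleGraph_adj] at this
    rcases this with h1 | h1
    · exact Or.inr (by rw [← h1]; ring)
    · exact Or.inl (by rw [← h1]; ring)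
  -- each non-cutset vertex is in A or B
  have hmemAB : ∀ s : ↑S, s ∉ C → s ∈ A ∨ s ∈ B := by
    intro s hs
    have : s ∈ A ∪ B ∪ C := huniv ▸ Set.mem_univ s
    rcases this with (h | h) | h
    · exact Or.inl h
    · exact Or.inr h
    · exact absurd h hs
  -- consecutive non-cutset hole vertices are on the same side
  have hstep : ∀ i : Fin (m + 2), i ∉ D → i + 1 ∉ D → (vi i ∈ A ↔ vi (i + 1) ∈ A) := by
    intro i hi hi1
    have hadj : (G.induce S).Adj (vi i) (vi (i + 1)) :=
      hadjvv i (i + 1) (cycleGraph_adj.mpr (Or.inr (by ring)))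
    constructor
    · intro hiA
      rcases hmemAB (vi (i + 1)) hi1 with h | h
      · exact h
      · exact absurd hadj (hedge _ hiA _ h)
    · intro hiA
      rcases hmemAB (vi i) hi with h | h
      · exact h
      · exact absurd hadj.symm (hedge _ hiA _ h)
  -- iterate around the hole
  have hchain : ∀ k : ℕ, ∀ e : Fin (m + 2), (∀ j : ℕ, j ≤ k → e + ↑(j + 1) ∉ D) →
      (vi (e + ↑(k + 1)) ∈ A ↔ vi (e + 1) ∈ A) := by
    intro k
    induction k with
    | zero => intro e _; norm_num
    | succ k ih =>
      intro e hj
      have h1 : e + ↑(k + 1 + 1) = (e + ↑(k + 1)) + 1 := by push_cast; ring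
      rw [h1]
      have h2 := hstep (e + ↑(k + 1)) (hj k (by omega)) (by rw [← h1]; exact hj (k + 1) le_rfl)
      exact h2.symm.trans (ih e (fun j hjk => hj j (by omega)))
  -- arithmetic helpers
  have hshift : ∀ (e : Fin (m + 2)) (j : ℕ), 0 < j → j < m + 2 → e + ↑j ≠ e := by
    intro e j h1 h2 h
    exact hjz j h1 h2 (by linear_combination h)
  have hm1 : ((m + 1 : ℕ) : Fin (m + 2)) = -1 := by
    have h0 : ((m + 2 : ℕ) : Fin (m + 2)) = 0 := Fin.natCast_self _
    push_cast at h0 ⊢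
    linear_combination h0
  have hnotD : ∀ i : Fin (m + 2), i ≠ d → i ≠ d + 1 → i ∉ D := fun i h1 h2 hi =>
    (hd i hi).elim h1 h2
  -- every hole vertex off `{d, d+1}` is on the same side as `vi (d+1+1)`
  have hsame : ∀ i : Fin (m + 2), i ≠ d → i ≠ d + 1 → (vi i ∈ A ↔ vi (d + 1 + 1) ∈ A) := by
    intro i hid hid1
    have hik : i = (d + 1) + ↑((i - (d + 1)).val) := by rw [Fin.cast_val_eq_self]; ring
    obtain ⟨k, hk⟩ : ∃ k, (i - (d + 1)).val = k + 1 := by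
      refine ⟨(i - (d + 1)).val - 1, ?_⟩
      have hne0 : (i - (d + 1)).val ≠ 0 := by
        intro h
        apply hid1
        rw [hik, h]; push_cast; ring
      omega
    have hklt : k + 1 < m + 2 := by rw [← hk]; exact (i - (d + 1)).isLt
    have hkne : k + 1 ≠ m + 1 := by
      intro h
      apply hid
      rw [hik, hk, h, hm1]; ring
    have hcond : ∀ j : ℕ, j ≤ k → (d + 1) + ↑(j + 1) ∉ D := by
      intro j hj hmemD
      rcases hd _ hmemD with h | h
      · push_cast at h
        exact hjz (j + 2) (by omega) (by omega) (by push_cast; linear_combination h)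
      · push_cast at h
        exact hjz (j + 1) (by omega) (by omega) (by push_cast; linear_combination h)
    have hch := hchain k (d + 1) hcond
    rw [hik, hk]
    exact hch
  have hdd2 : d + 1 + 1 ≠ d := by
    intro h; exact hjz 2 (by omega) (by omega) (by push_cast; linear_combination h)
  have hd1d2 : d + 1 + 1 ≠ d + 1 := by
    intro h; exact hjz 1 (by omega) (by omega) (by push_cast; linear_combination h)
  -- x has a neighbour on the hole away from {d, d+1}
  obtain ⟨i0, hi0adj, hi0d, hi0d1⟩ :
      ∃ i0 : Fin (m + 2), G.Adj x (f i0) ∧ i0 ≠ d ∧ i0 ≠ d + 1 := by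
    by_contra hcon
    push_neg at hcon
    have hsub : {i : Fin (m + 2) | G.Adj x (f i)} ⊆ {d, d + 1} := by
      intro i hi
      by_cases hide : i = d
      · exact Set.mem_insert_iff.mpr (Or.inl hide)
      · exact Set.mem_insert_iff.mpr (Or.inr (hcon i hi hide))
    have h1 := Set.ncard_le_ncard hsub (Set.toFinite _)
    have h2 : ({d, d + 1} : Set (Fin (m + 2))).ncard ≤ 2 := by
      refine le_trans (Set.ncard_insert_le _ _) ?_
      simp [Set.ncard_singleton]
    omega
  -- the key contradiction, parametric in the two sides
  have key : ∀ A' B' : Set ↑S, Disjoint A' B' → B'.Nonempty →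
      (∀ a ∈ A', ∀ b ∈ B', ¬ (G.induce S).Adj a b) →
      (∀ i : Fin (m + 2), i ≠ d → i ≠ d + 1 → vi i ∈ A') → False := by
    intro A' B' hAB' hB' hedge' hall'
    obtain ⟨b, hb⟩ := hB'
    rcases hSmem b with ⟨i, rfl⟩ | rfl
    · by_cases h1 : i = d
      · rw [h1] at hb
        have hmem : vi (d + ↑(m + 1)) ∈ A' := by
          apply hall'
          · exact hshift d (m + 1) (by omega) (by omega)
          · intro h
            push_cast at h
            exact hjz m (by omega) (by omega) (by linear_combination h)
        have hadj : (G.induce S).Adj (vi (d + ↑(m + 1))) (vi d) := by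
          apply hadjvv
          rw [cycleGraph_adj]
          right
          rw [hm1]; ring
        exact hedge' _ hmem _ hb hadj
      · by_cases h2 : i = d + 1
        · rw [h2] at hb
          have hmem : vi (d + 1 + 1) ∈ A' := hall' _ hdd2 hd1d2
          have hadj : (G.induce S).Adj (vi (d + 1 + 1)) (vi (d + 1)) := by
            apply hadjvv
            rw [cycleGraph_adj]
            left
            ring
          exact hedge' _ hmem _ hb hadj
        · exact Set.disjoint_left.1 hAB' (hall' i h1 h2) hb
    · have hmem : vi i0 ∈ A' := hall' i0 hi0d hi0d1
      have hadj : (G.induce S).Adj (vi i0) xx := by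
        simp only [comap_adj, hvi, hxx]
        exact hi0adj.symm
      exact hedge' _ hmem _ hb hadj
  rcases hmemAB (vi (d + 1 + 1)) (hnotD _ hdd2 hd1d2) with hcase | hcase
  · exact key A B hAB hB hedge (fun i h1 h2 => (hsame i h1 h2).mpr hcase)
  · refine key B A hAB.symm hA (fun b hb a ha h => hedge a ha b hb h.symm) ?_
    intro i h1 h2
    rcases hmemAB (vi i) (hnotD i h1 h2) with h | h
    · exact absurd hcase (Set.disjoint_left.1 hAB ((hsame i h1 h2).mp h))
    · exact h
end

section
/- Let G be a graph of girth at least 9 (no cycles of length less than 9). Then the complement of G contains no induced cycle of length at least 5, no induced K_{2,3}, and no induced complement-of-C_6 (i.e., the complement of G is (long hole, K_{2,3}, C̄_6)-free). -/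
open SimpleGraph Set

variable {V : Type*}

private lemma cycle3' {G : SimpleGraph V} {a b c : V} (hab : G.Adj a b) (hbc : G.Adj b c)
    (hca : G.Adj c a) : ∃ (x : V) (w : G.Walk x x), w.IsCycle ∧ w.length = 3 := by
  refine ⟨a, .cons hab (.cons hbc (.cons hca .nil)), ?_, rfl⟩
  simp [Walk.isCycle_def, Walk.isTrail_def, hab.ne, hbc.ne, hca.ne, hca.ne', hab.ne', hbc.ne']

private lemma cycle5' {G : SimpleGraph V} {a b c d e : V}
    (h1 : G.Adj a b) (h2 : G.Adj b c) (h3 : G.Adj c d) (h4 : G.Adj d e) (h5 : G.Adj e a)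
    (hac : a ≠ c) (had : a ≠ d) (hbd : b ≠ d) (hbe : b ≠ e) (hce : c ≠ e) :
    ∃ (x : V) (w : G.Walk x x), w.IsCycle ∧ w.length = 5 := by
  refine ⟨a, .cons h1 (.cons h2 (.cons h3 (.cons h4 (.cons h5 .nil)))), ?_, rfl⟩
  simp [Walk.isCycle_def, Walk.isTrail_def, h1.ne, h2.ne, h3.ne, h4.ne, h5.ne,
    h1.ne', h2.ne', h3.ne', h4.ne', h5.ne', hac, had, hbd, hbe, hce,
    hac.symm, had.symm, hbd.symm, hbe.symm, hce.symm]

private lemma cycle6' {G : SimpleGraph V} {a b c d e f : V}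
    (h1 : G.Adj a b) (h2 : G.Adj b c) (h3 : G.Adj c d) (h4 : G.Adj d e) (h5 : G.Adj e f)
    (h6 : G.Adj f a)
    (hac : a ≠ c) (had : a ≠ d) (hae : a ≠ e) (hbd : b ≠ d) (hbe : b ≠ e) (hbf : b ≠ f)
    (hce : c ≠ e) (hcf : c ≠ f) (hdf : d ≠ f) :
    ∃ (x : V) (w : G.Walk x x), w.IsCycle ∧ w.length = 6 := by
  refine ⟨a, .cons h1 (.cons h2 (.cons h3 (.cons h4 (.cons h5 (.cons h6 .nil))))), ?_, rfl⟩
  simp [Walk.isCycle_def, Walk.isTrail_def, h1.ne, h2.ne, h3.ne, h4.ne, h5.ne, h6.ne,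
    h1.ne', h2.ne', h3.ne', h4.ne', h5.ne', h6.ne',
    hac, had, hae, hbd, hbe, hbf, hce, hcf, hdf,
    hac.symm, had.symm, hae.symm, hbd.symm, hbe.symm, hbf.symm, hce.symm, hcf.symm, hdf.symm]

private lemma adj_of_compl {W : Type*} {A : SimpleGraph W} {G : SimpleGraph V}
    (f : A ↪g Gᶜ) {u v : W} (hne : u ≠ v) (hna : ¬ A.Adj u v) : G.Adj (f u) (f v) := by
  have h1 : ¬ Gᶜ.Adj (f u) (f v) := by rw [f.map_adj_iff]; exact hna
  rw [compl_adj, not_and_or] at h1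
  rcases h1 with h1 | h1
  · exact absurd (f.injective.ne hne) h1
  · exact not_not.mp h1

private lemma no_short {G : SimpleGraph V} (h : 9 ≤ G.egirth) {k : ℕ} (hk : k < 9)
    (hw : ∃ (x : V) (w : G.Walk x x), w.IsCycle ∧ w.length = k) : False := by
  obtain ⟨x, w, hc, hl⟩ := hw
  rw [le_egirth] at h
  have := h x w hc
  rw [hl] at this
  have h9 : (9 : ℕ∞) = ((9 : ℕ) : ℕ∞) := rfl
  rw [h9, Nat.cast_le] at this
  omega

private lemma cycleGraph_not_adj {n i j : ℕ} (hn : 5 ≤ n) (hij : i < j) (hj : j < n)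
    (h1 : j - i ≠ 1) (h2 : i + n - j ≠ 1) :
    ¬ (cycleGraph n).Adj ⟨i, by omega⟩ ⟨j, by omega⟩ := by
  rw [cycleGraph_adj']
  rintro (hh | hh) <;> rw [Fin.sub_def] at hh <;> simp only [] at hh
  · have e : (n - j + i) % n = i + n - j := by rw [Nat.mod_eq_of_lt (by omega)]; omega
    rw [e] at hh; omega
  · have e : (n - i + j) % n = j - i := by
      have : n - i + j = (j - i) + n := by omega
      rw [this, Nat.add_mod_right, Nat.mod_eq_of_lt (by omega)]
    rw [e] at hh; omega

theorem stmt19 (G : SimpleGraph V) (h : 9 ≤ G.egirth) :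
    (∀ n : ℕ, 5 ≤ n → IsEmpty (cycleGraph n ↪g Gᶜ)) ∧
      IsEmpty (completeBipartiteGraph (Fin 2) (Fin 3) ↪g Gᶜ) ∧
        IsEmpty ((cycleGraph 6)ᶜ ↪g Gᶜ) := by
  refine ⟨fun n hn => ⟨fun f => ?_⟩, ⟨fun f => ?_⟩, ⟨fun f => ?_⟩⟩
  · rcases eq_or_lt_of_le hn with hn5 | hn6
    · subst hn5
      -- 5-cycle: f 0, f 2, f 4, f 1, f 3
      refine no_short h (k := 5) (by omega) (cycle5'
        (adj_of_compl f (u := 0) (v := 2) (by decide) (by decide))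
        (adj_of_compl f (u := 2) (v := 4) (by decide) (by decide))
        (adj_of_compl f (u := 4) (v := 1) (by decide) (by decide))
        (adj_of_compl f (u := 1) (v := 3) (by decide) (by decide))
        (adj_of_compl f (u := 3) (v := 0) (by decide) (by decide))
        (f.injective.ne (by decide)) (f.injective.ne (by decide))
        (f.injective.ne (by decide)) (f.injective.ne (by decide))
        (f.injective.ne (by decide)))
    · -- n ≥ 6 : triangle on f 0, f 2, f 4
      have h6 : 6 ≤ n := hn6
      refine no_short h (k := 3) (by omega) (cycle3'
        (adj_of_compl f (u := ⟨0, by omega⟩) (v := ⟨2, by omega⟩)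
          (by simp [Fin.ext_iff]) (cycleGraph_not_adj hn (by omega) (by omega) (by omega) (by omega)))
        (adj_of_compl f (u := ⟨2, by omega⟩) (v := ⟨4, by omega⟩)
          (by simp [Fin.ext_iff]) (cycleGraph_not_adj hn (by omega) (by omega) (by omega) (by omega)))
        ((adj_of_compl f (u := ⟨0, by omega⟩) (v := ⟨4, by omega⟩)
          (by simp [Fin.ext_iff]) (cycleGraph_not_adj hn (by omega) (by omega) (by omega) (by omega))).symm))
  · -- K_{2,3}: triangle on the three right vertices
    refine no_short h (k := 3) (by omega) (cycle3'
      (adj_of_compl f (u := Sum.inr 0) (v := Sum.inr 1) (by decide) (by simp))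
      (adj_of_compl f (u := Sum.inr 1) (v := Sum.inr 2) (by decide) (by simp))
      (adj_of_compl f (u := Sum.inr 2) (v := Sum.inr 0) (by decide) (by simp)))
  · -- (C6)ᶜ : 6-cycle on f 0 .. f 5
    refine no_short h (k := 6) (by omega) (cycle6'
      (adj_of_compl f (u := 0) (v := 1) (by decide) (by decide))
      (adj_of_compl f (u := 1) (v := 2) (by decide) (by decide))
      (adj_of_compl f (u := 2) (v := 3) (by decide) (by decide))
      (adj_of_compl f (u := 3) (v := 4) (by decide) (by decide))
      (adj_of_compl f (u := 4) (v := 5) (by decide) (by decide))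
      (adj_of_compl f (u := 5) (v := 0) (by decide) (by decide))
      (f.injective.ne (by decide)) (f.injective.ne (by decide)) (f.injective.ne (by decide))
      (f.injective.ne (by decide)) (f.injective.ne (by decide)) (f.injective.ne (by decide))
      (f.injective.ne (by decide)) (f.injective.ne (by decide)) (f.injective.ne (by decide)))
end
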